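/- arXiv:1802.05824 — 3 statements merged into one kernel-verified Lean document; each statement's English description precedes it below -/
import Mathlib

section
/- Let O be a locally thin ordering of a weighted brick complex M. If k is a minimum of O, then the level surface S_k is a stable minimal surface, i.e., S_k admits no strict shortening move. -/
open Finset

/-- The total weight of a set of facets. -/
def wt {Facet : Type} [DecidableEq Facet] (ω : Facet → ℝ) (S : Finset Facet) : ℝ :=
  ∑ f ∈ S, ω f

/-- The strength σ(A;S) of a brick with set of interior facets `intA`
relative to a surface `S`:  ω(∂'_S A) − ω(∂_S A). -/
def strength {Facet : Type} [DecidableEq Facet] (ω : Facet → ℝ) (intA S : Finset Facet) : ℝ :=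
  wt ω (intA \ S) - wt ω (intA ∩ S)

/-- A surface (set of facets) is proper if none of its facets lies in ∂M and every
(n−2)-face not in ∂M is contained in an even number of its facets. -/
def ProperSurf {Facet Face : Type} [DecidableEq Facet] [DecidableEq Face]
    (bdF : Finset Facet) (facesOf : Facet → Finset Face) (bdE : Finset Face)
    (S : Finset Facet) : Prop :=
  (∀ f ∈ S, f ∉ bdF) ∧
  ∀ e : Face, e ∉ bdE → Even ((S.filter (fun f => e ∈ facesOf f)).card)

/-- The interior facets ∂_I A of a brick `A`: facets incident to exactly two bricks,
one of which is `A`. -/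
def intFacets {Brick Facet : Type} [DecidableEq Brick] [Fintype Facet] [DecidableEq Facet]
    (bricksOf : Facet → Finset Brick) (A : Brick) : Finset Facet :=
  univ.filter (fun f => A ∈ bricksOf f ∧ (bricksOf f).card = 2)

/-- The facets shared by two bricks `A` and `B` (∂A ⊓ ∂B). -/
def commonFacets {Brick Facet : Type} [DecidableEq Brick] [Fintype Facet] [DecidableEq Facet]
    (bricksOf : Facet → Finset Brick) (A B : Brick) : Finset Facet :=
  univ.filter (fun f => A ∈ bricksOf f ∧ B ∈ bricksOf f)

/-- `A` is a shortening move for `S` (given interior facets `intA` of `A`):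
it meets `S` and σ(A;S) ≤ 0. -/
def ShortMove {Facet : Type} [DecidableEq Facet] (ω : Facet → ℝ) (intA S : Finset Facet) : Prop :=
  (intA ∩ S).Nonempty ∧ strength ω intA S ≤ 0

/-- `A` is a strict shortening move for `S`: it meets `S` and σ(A;S) < 0. -/
def StrictShort {Facet : Type} [DecidableEq Facet] (ω : Facet → ℝ) (intA S : Finset Facet) : Prop :=
  (intA ∩ S).Nonempty ∧ strength ω intA S < 0

/-- The sublevel set M_j of an ordering: the bricks at heights 1,…,j. -/
def sublevel {Brick : Type} [Fintype Brick] [DecidableEq Brick] {N : ℕ}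
    (O : Fin N ≃ Brick) (j : ℕ) : Finset Brick :=
  univ.filter (fun T => ((O.symm T : Fin N) : ℕ) + 1 ≤ j)

/-- The level surface S_j at height j: facets shared between a brick of M_j and a
brick not in M_j. -/
def levelSurf {Brick Facet : Type} [Fintype Brick] [DecidableEq Brick]
    [Fintype Facet] [DecidableEq Facet]
    (bricksOf : Facet → Finset Brick) {N : ℕ} (O : Fin N ≃ Brick) (j : ℕ) : Finset Facet :=
  univ.filter (fun f => (∃ T ∈ bricksOf f, T ∈ sublevel O j) ∧ ∃ T ∈ bricksOf f, T ∉ sublevel O j)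

/-- Λ(j): the weight of the level surface at height j. -/
def Lam {Brick Facet : Type} [Fintype Brick] [DecidableEq Brick]
    [Fintype Facet] [DecidableEq Facet] (ω : Facet → ℝ)
    (bricksOf : Facet → Finset Brick) {N : ℕ} (O : Fin N ≃ Brick) (j : ℕ) : ℝ :=
  wt ω (levelSurf bricksOf O j)

/-- `t` is a (local) maximum of the ordering with level-weight function Λ. -/
def IsMaxAt (N : ℕ) (Λ : ℕ → ℝ) (t : ℕ) : Prop :=
  ∃ tm tp : ℕ, tm < t ∧ t < tp ∧ tp ≤ N ∧
    Λ tm < Λ (tm + 1) ∧ Λ tp < Λ (tp - 1) ∧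
    ∀ k, tm < k → k < tp → Λ k = Λ t

open Classical in
/-- The width Ω of an ordering: the values of Λ at its maxima, arranged in
non-increasing order. -/
noncomputable def widthList (N : ℕ) (Λ : ℕ → ℝ) : List ℝ :=
  ((((Finset.range (N + 1)).filter (fun t => IsMaxAt N Λ t)).val.map Λ).sort (· ≤ ·)).reverse

/-- Strict lexicographic comparison of widths. -/
def WidthLT (l₁ l₂ : List ℝ) : Prop := List.Lex (· < ·) l₁ l₂

/-- Lexicographic comparison of widths. -/
def WidthLE (l₁ l₂ : List ℝ) : Prop := WidthLT l₁ l₂ ∨ l₁ = l₂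

/-- A single legal swap: O' is obtained from O by interchanging the bricks at heights
i and i+1, without increasing width. -/
def ThinStep {Brick Facet : Type} [Fintype Brick] [DecidableEq Brick]
    [Fintype Facet] [DecidableEq Facet]
    (ω : Facet → ℝ) (bricksOf : Facet → Finset Brick) {N : ℕ}
    (O O' : Fin N ≃ Brick) : Prop :=
  (∃ (i : Fin N) (hi : (i : ℕ) + 1 < N),
    O' = (Equiv.swap i ⟨(i : ℕ) + 1, hi⟩).trans O) ∧
  WidthLE (widthList N (Lam ω bricksOf O')) (widthList N (Lam ω bricksOf O))

/-- `O` thins to `O'`: a sequence of width-non-increasing adjacent swaps leads from O to O'. -/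
def ThinsTo {Brick Facet : Type} [Fintype Brick] [DecidableEq Brick]
    [Fintype Facet] [DecidableEq Facet]
    (ω : Facet → ℝ) (bricksOf : Facet → Finset Brick) {N : ℕ}
    (O O' : Fin N ≃ Brick) : Prop :=
  Relation.ReflTransGen (ThinStep ω bricksOf) O O'

/-- `O` is locally thin: it does not thin to any ordering of strictly smaller width. -/
def LocallyThin {Brick Facet : Type} [Fintype Brick] [DecidableEq Brick]
    [Fintype Facet] [DecidableEq Facet]
    (ω : Facet → ℝ) (bricksOf : Facet → Finset Brick) {N : ℕ}
    (O : Fin N ≃ Brick) : Prop :=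
  ∀ O' : Fin N ≃ Brick, ThinsTo ω bricksOf O O' →
    ¬ WidthLT (widthList N (Lam ω bricksOf O')) (widthList N (Lam ω bricksOf O))

/-- `t` is a (local) minimum of the ordering with level-weight function Λ. -/
def IsMinAt (N : ℕ) (Λ : ℕ → ℝ) (t : ℕ) : Prop :=
  ∃ tm tp : ℕ, tm < t ∧ t < tp ∧ tp ≤ N ∧
    Λ (tm + 1) < Λ tm ∧ Λ (tp - 1) < Λ tp ∧
    ∀ k, tm < k → k < tp → Λ k = Λ t

/-- `S` is a stable minimal surface: it admits no strict shortening move. -/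
def StableMin {Brick Facet : Type} [DecidableEq Brick] [Fintype Facet] [DecidableEq Facet]
    (ω : Facet → ℝ) (bricksOf : Facet → Finset Brick) (S : Finset Facet) : Prop :=
  ∀ A : Brick, ¬ StrictShort ω (intFacets bricksOf A) S

/-- `S` is an unstable minimal surface (Definition 2.8): the bricks partition into two
nonempty sets 𝒜, ℬ such that (1) all facets common to bricks on opposite sides lie in S;
(2) each side contains a shortening move and some side a strict one; (3) every strict
shortening move on one side is balanced by a shortening move on the other with
2ω(∂A ⊓ ∂B) ≥ |σ(A;S)| + |σ(B;S)|; and (4) this inequality holds for every pair of strict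
shortening moves on opposite sides. -/
def UnstableMin {Brick Facet : Type} [Fintype Brick] [DecidableEq Brick]
    [Fintype Facet] [DecidableEq Facet]
    (ω : Facet → ℝ) (bricksOf : Facet → Finset Brick) (S : Finset Facet) : Prop :=
  ∃ 𝒜 ℬ : Finset Brick, 𝒜.Nonempty ∧ ℬ.Nonempty ∧ 𝒜 ∩ ℬ = ∅ ∧ 𝒜 ∪ ℬ = univ ∧
    (∀ A ∈ 𝒜, ∀ B ∈ ℬ, commonFacets bricksOf A B ⊆ S) ∧
    (∃ A ∈ 𝒜, ShortMove ω (intFacets bricksOf A) S) ∧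
    (∃ B ∈ ℬ, ShortMove ω (intFacets bricksOf B) S) ∧
    ((∃ A ∈ 𝒜, StrictShort ω (intFacets bricksOf A) S) ∨
     (∃ B ∈ ℬ, StrictShort ω (intFacets bricksOf B) S)) ∧
    (∀ A ∈ 𝒜, StrictShort ω (intFacets bricksOf A) S →
      ∃ B ∈ ℬ, ShortMove ω (intFacets bricksOf B) S ∧
        2 * wt ω (commonFacets bricksOf A B) ≥
          |strength ω (intFacets bricksOf A) S| + |strength ω (intFacets bricksOf B) S|) ∧
    (∀ B ∈ ℬ, StrictShort ω (intFacets bricksOf B) S →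
      ∃ A ∈ 𝒜, ShortMove ω (intFacets bricksOf A) S ∧
        2 * wt ω (commonFacets bricksOf A B) ≥
          |strength ω (intFacets bricksOf A) S| + |strength ω (intFacets bricksOf B) S|) ∧
    (∀ A ∈ 𝒜, ∀ B ∈ ℬ, StrictShort ω (intFacets bricksOf A) S →
      StrictShort ω (intFacets bricksOf B) S →
        2 * wt ω (commonFacets bricksOf A B) ≥
          |strength ω (intFacets bricksOf A) S| + |strength ω (intFacets bricksOf B) S|)

namespace Stmt11

noncomputable def desc (m : Multiset ℝ) : List ℝ := (m.sort (· ≤ ·)).reverse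

lemma desc_coe (m : Multiset ℝ) : ((desc m : List ℝ) : Multiset ℝ) = m := by
  rw [desc, Multiset.coe_reverse, Multiset.sort_eq]

lemma mem_desc {a : ℝ} {m : Multiset ℝ} : a ∈ desc m ↔ a ∈ m := by
  rw [← Multiset.mem_coe, desc_coe]

lemma desc_sorted (m : Multiset ℝ) : (desc m).Pairwise (fun a b => b ≤ a) := by
  rw [desc]
  exact List.pairwise_reverse.2 (Multiset.pairwise_sort m _)

instance : IsAntisymm ℝ (fun a b : ℝ => b ≤ a) := ⟨fun a b h1 h2 => le_antisymm h2 h1⟩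

lemma desc_unique {m : Multiset ℝ} {l : List ℝ} (hs : l.Pairwise (fun a b => b ≤ a))
    (hc : (l : Multiset ℝ) = m) : desc m = l := by
  refine List.Perm.eq_of_pairwise (fun a b _ _ h1 h2 => le_antisymm h2 h1) (desc_sorted m) hs ?_
  have h2 : ((desc m : List ℝ) : Multiset ℝ) = (l : Multiset ℝ) := by rw [desc_coe, hc]
  exact Multiset.coe_eq_coe.1 h2

lemma desc_append {m₁ m₂ : Multiset ℝ} (h : ∀ a ∈ m₁, ∀ b ∈ m₂, b ≤ a) :
    desc (m₁ + m₂) = desc m₁ ++ desc m₂ := by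
  refine desc_unique ?_ ?_
  · rw [List.pairwise_append]
    exact ⟨desc_sorted m₁, desc_sorted m₂,
      fun a ha b hb => h a (mem_desc.1 ha) b (mem_desc.1 hb)⟩
  · rw [← Multiset.coe_add, desc_coe, desc_coe]

lemma desc_const {m : Multiset ℝ} {c : ℝ} (h : ∀ x ∈ m, x = c) :
    desc m = List.replicate m.card c := by
  refine desc_unique ?_ ?_
  · apply List.pairwise_replicate.2  -- guess; fallback below
    exact Or.inr le_rfl
  · rw [Multiset.coe_replicate]
    exact (Multiset.eq_replicate_card.2 h).symm

lemma desc_head {m : Multiset ℝ} (hm : m ≠ 0) :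
    ∃ a l', desc m = a :: l' ∧ a ∈ m ∧ (∀ x ∈ m, x ≤ a) ∧ l' = desc (m.erase a) := by
  have hlen : (desc m).length = Multiset.card m := by
    rw [desc, List.length_reverse, Multiset.length_sort]
  cases hd : desc m with
  | nil => exfalso; rw [hd] at hlen; simp at hlen; exact hm (by simpa using hlen.symm)
  | cons a l' =>
    have hcoe : (a ::ₘ (l' : Multiset ℝ)) = m := by
      rw [Multiset.cons_coe, ← hd, desc_coe]
    have ham : a ∈ m := by rw [← hcoe]; exact Multiset.mem_cons_self _ _
    have hs := desc_sorted m
    rw [hd, List.pairwise_cons] at hs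
    refine ⟨a, l', rfl, ham, ?_, ?_⟩
    · intro x hx
      rw [← hcoe, Multiset.mem_cons] at hx
      rcases hx with h | h
      · exact le_of_eq h
      · exact hs.1 x (Multiset.mem_coe.1 h)
    · refine (desc_unique hs.2 ?_).symm
      rw [← hcoe, Multiset.erase_cons_head]

end Stmt11
namespace Stmt11

lemma widthLE_refl (l : List ℝ) : WidthLE l l := Or.inr rfl

lemma desc_le_aux (n : ℕ) : ∀ (A B : Multiset ℝ), Multiset.card B ≤ n → A ≤ B →
    WidthLE (desc A) (desc B) := by
  induction n with
  | zero =>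
    intro A B hc hAB
    have hB : B = 0 := by
      rw [← Multiset.card_eq_zero]; omega
    have hA : A = 0 := by
      rw [← Multiset.le_zero, ← hB]; exact hAB
    rw [hA, hB]; exact widthLE_refl _
  | succ n ih =>
    intro A B hc hAB
    by_cases hA : A = 0
    · by_cases hB : B = 0
      · rw [hA, hB]; exact widthLE_refl _
      · obtain ⟨b, lb, hdb, -, -, -⟩ := desc_head hB
        left
        rw [hA, hdb]
        show List.Lex _ (desc 0) _
        have : desc 0 = ([] : List ℝ) := by
          have := desc_coe (0 : Multiset ℝ)
          cases h : desc (0 : Multiset ℝ) with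
          | nil => rfl
          | cons x l =>
            rw [h] at this
            exact absurd this (by simp)
        rw [this]
        exact List.Lex.nil
    · have hBne : B ≠ 0 := by
        intro h; rw [h, Multiset.le_zero] at hAB; exact hA hAB
      obtain ⟨a, la, hda, haA, hamax, hta⟩ := desc_head hA
      obtain ⟨b, lb, hdb, hbB, hbmax, htb⟩ := desc_head hBne
      have hab : a ≤ b := hbmax a (Multiset.mem_of_le hAB haA)
      rcases lt_or_eq_of_le hab with h | h
      · left; rw [hda, hdb]; exact List.Lex.rel h
      · subst h
        have her : A.erase a ≤ B.erase a := Multiset.erase_le_erase a hAB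
        have hcard : Multiset.card (B.erase a) ≤ n := by
          rw [Multiset.card_erase_of_mem hbB, Nat.pred_eq_sub_one]
          omega
        rcases ih (A.erase a) (B.erase a) hcard her with h | h
        · left; rw [hda, hdb, hta, htb]; exact List.Lex.cons h
        · rw [hda, hdb, hta, htb, h]; exact widthLE_refl _

lemma desc_le_of_le {A B : Multiset ℝ} (h : A ≤ B) : WidthLE (desc A) (desc B) :=
  desc_le_aux (Multiset.card B) A B le_rfl h

lemma desc_lt_key {C R R' : Multiset ℝ} {M₀ : ℝ}
    (hR : ∀ x ∈ R, x ≤ M₀) (hR' : ∀ x ∈ R', x < M₀) (hM : M₀ ∈ R) :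
    WidthLT (desc (C + R')) (desc (C + R)) := by
  classical
  -- decompositions
  have hsplit : ∀ m : Multiset ℝ,
      desc m = desc (m.filter (fun x => M₀ < x)) ++
        (List.replicate (Multiset.card ((m.filter (fun x => ¬ M₀ < x)).filter (fun x => M₀ ≤ x))) M₀
          ++ desc ((m.filter (fun x => ¬ M₀ < x)).filter (fun x => ¬ M₀ ≤ x))) := by
    intro m
    conv_lhs => rw [← Multiset.filter_add_not (fun x => M₀ < x) m]
    rw [desc_append (by
      intro x hx y hy
      rw [Multiset.mem_filter] at hx hy
      have := hx.2; have := hy.2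
      push_neg at *
      linarith [hx.2, hy.2])]
    congr 1
    conv_lhs => rw [← Multiset.filter_add_not (fun x => M₀ ≤ x) (m.filter (fun x => ¬ M₀ < x))]
    rw [desc_append (by
      intro x hx y hy
      rw [Multiset.mem_filter] at hx hy
      push_neg at *
      linarith [hx.2, hy.2])]
    congr 1
    apply desc_const
    intro x hx
    rw [Multiset.mem_filter, Multiset.mem_filter] at hx
    push_neg at hx
    linarith [hx.1.2, hx.2]
  have e1 : (C + R').filter (fun x => M₀ < x) = C.filter (fun x => M₀ < x) := by
    rw [Multiset.filter_add]
    have : R'.filter (fun x => M₀ < x) = 0 := by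
      rw [Multiset.filter_eq_nil]
      intro a ha; exact not_lt.2 (le_of_lt (hR' a ha))
    rw [this, add_zero]
  have e2 : (C + R).filter (fun x => M₀ < x) = C.filter (fun x => M₀ < x) := by
    rw [Multiset.filter_add]
    have : R.filter (fun x => M₀ < x) = 0 := by
      rw [Multiset.filter_eq_nil]
      intro a ha; exact not_lt.2 (hR a ha)
    rw [this, add_zero]
  set CL := (C.filter (fun x => ¬ M₀ < x)) with hCL
  have e3 : (C + R').filter (fun x => ¬ M₀ < x) = CL + R' := by
    rw [Multiset.filter_add]
    congr 1
    rw [Multiset.filter_eq_self]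
    intro a ha; exact not_lt.2 (le_of_lt (hR' a ha))
  have e4 : (C + R).filter (fun x => ¬ M₀ < x) = CL + R := by
    rw [Multiset.filter_add]
    congr 1
    rw [Multiset.filter_eq_self]
    intro a ha; exact not_lt.2 (hR a ha)
  have e5 : (CL + R').filter (fun x => M₀ ≤ x) = CL.filter (fun x => M₀ ≤ x) := by
    rw [Multiset.filter_add]
    have : R'.filter (fun x => M₀ ≤ x) = 0 := by
      rw [Multiset.filter_eq_nil]
      intro a ha; exact not_le.2 (hR' a ha)
    rw [this, add_zero]
  have e6 : (CL + R).filter (fun x => M₀ ≤ x) = CL.filter (fun x => M₀ ≤ x) + R.filter (fun x => M₀ ≤ x) :=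
    Multiset.filter_add _ _ _
  have e7 : (CL + R').filter (fun x => ¬ M₀ ≤ x) = CL.filter (fun x => ¬ M₀ ≤ x) + R' := by
    rw [Multiset.filter_add]
    congr 1
    rw [Multiset.filter_eq_self]
    intro a ha; exact not_le.2 (hR' a ha)
  have hRpos : 1 ≤ Multiset.card (R.filter (fun x => M₀ ≤ x)) := by
    rw [Nat.one_le_iff_ne_zero, Ne, Multiset.card_eq_zero]
    intro h
    have : M₀ ∈ R.filter (fun x => M₀ ≤ x) := Multiset.mem_filter.2 ⟨hM, le_rfl⟩
    rw [h] at this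
    simp at this
  show List.Lex _ _ _
  rw [hsplit (C + R'), hsplit (C + R), e1, e2, e3, e4, e5, e6, e7]
  apply List.Lex.append_left
  rw [Multiset.card_add, List.replicate_add, List.append_assoc]
  apply List.Lex.append_left
  -- goal: Lex (desc (CL.filter ¬≤ + R')) (replicate (card R.filter ≤) M₀ ++ desc ((CL+R).filter ¬≤))
  obtain ⟨nr, hnr⟩ : ∃ nr, Multiset.card (R.filter (fun x => M₀ ≤ x)) = nr + 1 :=
    ⟨_, (Nat.succ_pred_eq_of_pos hRpos).symm⟩
  rw [hnr, List.replicate_succ]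
  cases hd : desc (CL.filter (fun x => ¬ M₀ ≤ x) + R') with
  | nil => exact List.Lex.nil
  | cons x l =>
    have hx : x ∈ CL.filter (fun x => ¬ M₀ ≤ x) + R' := by
      rw [← mem_desc, hd]; exact List.mem_cons_self
    have hxlt : x < M₀ := by
      rw [Multiset.mem_add] at hx
      rcases hx with h | h
      · rw [Multiset.mem_filter] at h; exact not_le.1 h.2
      · exact hR' x h
    exact List.Lex.rel hxlt

end Stmt11
namespace Stmt11

noncomputable def maxF (N : ℕ) (Λ : ℕ → ℝ) : Finset ℕ :=
  @Finset.filter _ (fun t => IsMaxAt N Λ t) (Classical.decPred _) (Finset.range (N + 1))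

lemma mem_maxF {N t : ℕ} {Λ : ℕ → ℝ} : t ∈ maxF N Λ ↔ t < N + 1 ∧ IsMaxAt N Λ t := by
  simp only [maxF, Finset.mem_filter, Finset.mem_range]

open Classical in
lemma widthList_eq (N : ℕ) (Λ : ℕ → ℝ) : widthList N Λ = desc ((maxF N Λ).val.map Λ) := by
  rw [widthList, desc, maxF]

lemma isMaxAt_transfer {N c d : ℕ} {Λ₁ Λ₂ : ℕ → ℝ} {M₁ : ℝ} (hcd : c < d)
    (heq : ∀ h, ¬(c < h ∧ h < d) → Λ₁ h = Λ₂ h)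
    (hval : ∀ h, c ≤ h → h ≤ d → Λ₁ h < M₁)
    {t : ℕ} (hmax : IsMaxAt N Λ₁ t) (hbig : M₁ ≤ Λ₁ t) :
    IsMaxAt N Λ₂ t ∧ Λ₂ t = Λ₁ t := by
  obtain ⟨tm, tp, h1, h2, h3, h4, h5, hplat⟩ := hmax
  have havoid : ∀ j, tm < j → j < tp → (j < c ∨ d < j) := by
    intro j hj1 hj2
    by_contra hcon
    push_neg at hcon
    have hJ : Λ₁ j = Λ₁ t := hplat j hj1 hj2
    have := hval j hcon.1 hcon.2
    rw [hJ] at this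
    linarith
  have hdich : tp ≤ c ∨ d ≤ tm := by
    have htm1 : tm < tm + 1 := Nat.lt_succ_self _
    have htm1' : tm + 1 < tp := by omega
    rcases havoid (tm + 1) htm1 htm1' with h | h
    · left
      by_contra hcon
      push_neg at hcon
      rcases havoid c (by omega) hcon with h' | h'
      · omega
      · omega
    · right; omega
  have heqAll : ∀ j, j ≤ tp → tp ≤ c → Λ₁ j = Λ₂ j := fun j hj hc' => heq j (by omega)
  have heqAll' : ∀ j, tm ≤ j → d ≤ tm → Λ₁ j = Λ₂ j := fun j hj hd' => heq j (by omega)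
  rcases hdich with hca | hca
  · constructor
    · exact ⟨tm, tp, h1, h2, h3, by
        rw [← heqAll tm (by omega) hca, ← heqAll (tm+1) (by omega) hca]; exact h4, by
        rw [← heqAll tp (by omega) hca, ← heqAll (tp-1) (by omega) hca]; exact h5, by
        intro j hj1 hj2
        rw [← heqAll j (by omega) hca, ← heqAll t (by omega) hca]
        exact hplat j hj1 hj2⟩
    · exact (heqAll t (by omega) hca).symm
  · constructor
    · exact ⟨tm, tp, h1, h2, h3, by
        rw [← heqAll' tm (by omega) hca, ← heqAll' (tm+1) (by omega) hca]; exact h4, by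
        rw [← heqAll' tp (by omega) hca, ← heqAll' (tp-1) (by omega) hca]; exact h5, by
        intro j hj1 hj2
        rw [← heqAll' j (by omega) hca, ← heqAll' t (by omega) hca]
        exact hplat j hj1 hj2⟩
    · exact (heqAll' t (by omega) hca).symm

lemma widthDrop {N c d : ℕ} {Λ Λ' : ℕ → ℝ} {M₀ : ℝ} (hcd : c < d)
    (hout : ∀ h, ¬(c < h ∧ h < d) → Λ' h = Λ h)
    (hin : ∀ h, c < h → h < d → Λ' h < M₀ ∧ Λ h ≤ M₀)
    (hc : Λ c < M₀) (hd : Λ d < M₀)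
    {t₀ : ℕ} (ht0r : t₀ < N + 1) (ht0w1 : c < t₀) (ht0w2 : t₀ < d)
    (ht0 : IsMaxAt N Λ t₀) (ht0v : Λ t₀ = M₀) :
    WidthLT (widthList N Λ') (widthList N Λ) := by
  classical
  set Cs : Finset ℕ := (Finset.range (N+1)).filter
    (fun t => IsMaxAt N Λ t ∧ IsMaxAt N Λ' t ∧ Λ t = Λ' t) with hCs
  have hCsF : Cs ⊆ maxF N Λ := by
    intro t ht
    rw [Finset.mem_filter] at ht
    exact mem_maxF.2 ⟨Finset.mem_range.1 ht.1, ht.2.1⟩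
  have hCsF' : Cs ⊆ maxF N Λ' := by
    intro t ht
    rw [Finset.mem_filter] at ht
    exact mem_maxF.2 ⟨Finset.mem_range.1 ht.1, ht.2.2.1⟩
  have hdecomp : ∀ (F : Finset ℕ), Cs ⊆ F → F.val = Cs.val + (F \ Cs).val := by
    intro F hsub
    rw [Finset.sdiff_val]
    exact (add_tsub_cancel_of_le (Finset.val_le_iff.2 hsub)).symm
  -- transfer claims
  have hAlpha : ∀ t, IsMaxAt N Λ t → ¬ (Λ t ≤ M₀) → t ∈ Finset.range (N+1) →  t ∈ Cs := by
    intro t hmax hgt htr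
    have := isMaxAt_transfer (Λ₁ := Λ) (Λ₂ := Λ') (M₁ := Λ t) hcd
      (fun h hh => (hout h hh).symm)
      (by
        intro h hh1 hh2
        push_neg at hgt
        rcases Nat.lt_or_ge c h with h1 | h1
        · rcases Nat.lt_or_ge h d with h2 | h2
          · have := (hin h h1 h2).2; linarith
          · have : h = d := by omega
            rw [this]; linarith
        · have : h = c := by omega
          rw [this]; linarith)
      hmax le_rfl
    rw [hCs, Finset.mem_filter]
    exact ⟨htr, hmax, this.1, this.2.symm⟩
  have hBeta : ∀ t, IsMaxAt N Λ' t → ¬ (Λ' t < M₀) → t ∈ Finset.range (N+1) → t ∈ Cs := by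
    intro t hmax hge htr
    have := isMaxAt_transfer (Λ₁ := Λ') (Λ₂ := Λ) (M₁ := M₀) hcd hout
      (by
        intro h hh1 hh2
        rcases Nat.lt_or_ge c h with h1 | h1
        · rcases Nat.lt_or_ge h d with h2 | h2
          · exact (hin h h1 h2).1
          · have : h = d := by omega
            rw [this, hout d (by omega)]; exact hd
        · have : h = c := by omega
          rw [this, hout c (by omega)]; exact hc)
      hmax (not_lt.1 hge)
    rw [hCs, Finset.mem_filter]
    exact ⟨htr, this.1, hmax, this.2⟩
  rw [widthList_eq, widthList_eq, hdecomp _ hCsF, hdecomp _ hCsF',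
    Multiset.map_add, Multiset.map_add]
  have hmapC : (Cs.val.map Λ') = (Cs.val.map Λ) := by
    apply Multiset.map_congr rfl
    intro x hx
    rw [hCs] at hx
    have := Finset.mem_filter.1 (Finset.mem_val ▸ hx)
    exact this.2.2.2.symm
  rw [hmapC]
  apply desc_lt_key (M₀ := M₀)
  · intro x hx
    rw [Multiset.mem_map] at hx
    obtain ⟨t, ht, rfl⟩ := hx
    have htm : t ∈ maxF N Λ \ Cs := ht
    rw [Finset.mem_sdiff, mem_maxF] at htm
    by_contra hcon
    exact htm.2 (hAlpha t htm.1.2 hcon (Finset.mem_range.2 htm.1.1))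
  · intro x hx
    rw [Multiset.mem_map] at hx
    obtain ⟨t, ht, rfl⟩ := hx
    have htm : t ∈ maxF N Λ' \ Cs := ht
    rw [Finset.mem_sdiff, mem_maxF] at htm
    by_contra hcon
    exact htm.2 (hBeta t htm.1.2 hcon (Finset.mem_range.2 htm.1.1))
  · rw [Multiset.mem_map]
    refine ⟨t₀, ?_, ht0v⟩
    have ht0c : t₀ ∉ Cs := by
      rw [hCs, Finset.mem_filter]
      rintro ⟨-, -, -, hv⟩
      have := (hin t₀ ht0w1 ht0w2).1
      rw [← hv, ht0v] at this
      linarith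
    have : t₀ ∈ maxF N Λ \ Cs := Finset.mem_sdiff.2 ⟨mem_maxF.2 ⟨ht0r, ht0⟩, ht0c⟩
    exact this

end Stmt11
namespace Stmt11

lemma maxTransferMid {N h₀ : ℕ} {f g : ℕ → ℝ}
    (hoff : ∀ j, j ≠ h₀ → g j = f j) (h1 : 1 ≤ h₀)
    (hf1 : f (h₀-1) < f h₀) (hf2 : f h₀ < f (h₀+1))
    (hg1 : f (h₀-1) < g h₀) (hg2 : g h₀ < f (h₀+1))
    {t : ℕ} (ht : IsMaxAt N f t) : IsMaxAt N g t ∧ g t = f t := by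
  obtain ⟨tm, tp, ht1, ht2, ht3, ht4, ht5, hplat⟩ := ht
  have hnotin : ¬ (tm < h₀ ∧ h₀ < tp) := by
    rintro ⟨ha, hb⟩
    have hv : f h₀ = f t := hplat h₀ ha hb
    rcases Nat.lt_or_ge (h₀+1) tp with hc | hc
    · have : f (h₀+1) = f t := hplat (h₀+1) (by omega) hc
      linarith
    · have : h₀ + 1 = tp := by omega
      rw [← this] at ht5
      have : f (h₀ + 1 - 1) = f h₀ := by norm_num
      rw [this] at ht5; linarith
  have hth : t ≠ h₀ := fun h => hnotin ⟨by omega, by omega⟩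
  have hgt : g t = f t := hoff t hth
  have htpne : tp ≠ h₀ := by
    intro h
    rw [h] at ht5
    linarith
  constructor
  · refine ⟨tm, tp, ht1, ht2, ht3, ?_, ?_, ?_⟩
    · by_cases htm : tm = h₀
      · rw [htm, hoff (h₀+1) (by omega)]
        exact hg2
      · rw [hoff tm htm, hoff (tm+1) (by
          intro h
          exact hnotin ⟨by omega, by omega⟩)]
        exact ht4
    · rw [hoff tp htpne, hoff (tp-1) (by
        intro h
        -- tp - 1 = h₀ : then h₀ ∈ (tm,tp) unless tm ≥ h₀...
        rcases Nat.lt_or_ge tm h₀ with hx | hx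
        · exact hnotin ⟨hx, by omega⟩
        · -- tm ≥ h₀ = tp - 1, but tm < tp so tm = tp-1 = h₀, then tm = h₀:
          -- condition ht4 : f tm < f (tm+1), tm = h₀, tm+1 = tp: f h₀ < f tp
          -- and ht5: f tp < f (tp-1) = f h₀: contra
          have htm : tm = h₀ := by omega
          have htp : tp = h₀ + 1 := by omega
          rw [htm] at ht4
          rw [htp] at ht5
          have : f (h₀ + 1 - 1) = f h₀ := by norm_num
          rw [this] at ht5
          linarith)]
      exact ht5
    · intro j hj1 hj2
      rw [hoff j (fun h => hnotin ⟨by omega, by omega⟩), hgt]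
      exact hplat j hj1 hj2
  · exact hgt

lemma stepWidth {N h₀ : ℕ} {Λ Λ' : ℕ → ℝ} (h1 : 1 ≤ h₀) (h2 : h₀ + 1 ≤ N)
    (hoff : ∀ j, j ≠ h₀ → Λ' j = Λ j) {s s' : ℝ} (hss : s ≤ s') (hs' : s' < 0)
    (hL : Λ (h₀ - 1) = Λ h₀ + s) (hy : Λ' h₀ = Λ (h₀ + 1) + s') :
    WidthLE (widthList N Λ') (widthList N Λ) := by
  have hs : s < 0 := lt_of_le_of_lt hss hs'
  have hLx : Λ (h₀ - 1) < Λ h₀ := by rw [hL]; linarith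
  have hyR : Λ' h₀ < Λ (h₀ + 1) := by rw [hy]; linarith
  have hyL : Λ (h₀ + 1) - Λ h₀ ≤ Λ' h₀ - Λ (h₀ - 1) := by
    rw [hy, hL]; linarith
  rcases lt_trichotomy (Λ h₀) (Λ (h₀+1)) with hxR | hxR | hxR
  · -- strictly rising through h₀ : widths equal
    right
    rw [widthList_eq, widthList_eq]
    have hgy : Λ (h₀ - 1) < Λ' h₀ := by linarith
    have hset : maxF N Λ' = maxF N Λ := by
      ext u
      rw [mem_maxF, mem_maxF]
      constructor
      · rintro ⟨hu1, hu2⟩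
        refine ⟨hu1, (maxTransferMid (f := Λ') (g := Λ) ?_ h1 ?_ ?_ ?_ ?_ hu2).1⟩
        · intro j hj; exact (hoff j hj).symm
        · rw [hoff (h₀-1) (by omega)]; exact hgy
        · rw [hoff (h₀+1) (by omega)]; exact hyR
        · rw [hoff (h₀-1) (by omega)]; exact hLx
        · rw [hoff (h₀+1) (by omega)]; exact hxR
      · rintro ⟨hu1, hu2⟩
        exact ⟨hu1, (maxTransferMid hoff h1 hLx hxR hgy hyR hu2).1⟩
    rw [hset]
    congr 1
    apply Multiset.map_congr rfl
    intro u hu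
    have hu' := mem_maxF.1 hu
    exact (maxTransferMid hoff h1 hLx hxR hgy hyR hu'.2).2
  · -- x = R : new maxima ⊆ old maxima
    have hyx : Λ' h₀ < Λ h₀ := by rw [hxR]; exact hyR
    have hgy : Λ (h₀ - 1) ≤ Λ' h₀ := by rw [hy, hL, ← hxR]; linarith
    have hsub : ∀ t, t ∈ maxF N Λ' → t ∈ maxF N Λ ∧ Λ' t = Λ t := by
      intro t ht
      obtain ⟨htr, htm⟩ := mem_maxF.1 ht
      obtain ⟨tm, tp, ht1, ht2, ht3, ht4, ht5, hplat⟩ := htm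
      have htpne : tp ≠ h₀ := by
        intro h
        rw [h] at ht5
        rw [hoff (h₀-1) (by omega)] at ht5
        subst h
        linarith
      have hnotin : ¬ (tm < h₀ ∧ h₀ < tp) := by
        rintro ⟨ha, hb⟩
        have hv : Λ' h₀ = Λ' t := hplat h₀ ha hb
        rcases Nat.lt_or_ge (h₀+1) tp with hc | hc
        · have h6 : Λ' (h₀+1) = Λ' t := hplat (h₀+1) (by omega) hc
          rw [hoff (h₀+1) (by omega)] at h6
          rw [← hv] at h6
          linarith
        · have he : h₀ + 1 = tp := by omega
          rw [← he] at ht5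
          have h7 : (h₀ + 1 - 1) = h₀ := by omega
          rw [h7] at ht5
          rw [hoff (h₀+1) (by omega), ← hxR] at ht5
          linarith
      by_cases htmh : tm = h₀
      · -- new witness (h₀ - 1, tp)
        subst htmh
        have htne : t ≠ tm := by omega
        have htp1 : tm + 1 < tp := by
          rcases Nat.lt_or_ge (tm+1) tp with h | h
          · exact h
          · omega
        have hvR : Λ' t = Λ (tm+1) := by
          rw [← hoff (tm+1) (by omega)]
          exact (hplat (tm+1) (by omega) htp1).symm
        have hvx : Λ t = Λ' t := by
          rw [(hoff t htne)]
        refine ⟨mem_maxF.2 ⟨htr, ⟨tm - 1, tp, by omega, ht2, ht3, ?_, ?_, ?_⟩⟩, (hoff t htne)⟩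
        · have : tm - 1 + 1 = tm := by omega
          rw [this]
          exact hLx
        · rw [← hoff tp htpne, ← hoff (tp-1) (by omega)]
          exact ht5
        · intro j hj1 hj2
          rcases Nat.lt_or_ge tm j with hj | hj
          · rw [← hoff j (by omega), hvx]
            exact hplat j hj hj2
          · have : j = tm := by omega
            rw [this, hvx, hvR, ← hxR]
      · -- h₀ ∉ [tm, tp] : direct transfer
        have hout : h₀ < tm ∨ tp < h₀ := by
          rcases Nat.lt_or_ge h₀ tm with h | h
          · left; exact h
          · right
            rcases Nat.lt_or_ge tp h₀ with h' | h'
            · exact h'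
            · exfalso
              exact hnotin ⟨by omega, by omega⟩
        have hoffall : ∀ j, tm ≤ j → j ≤ tp → Λ' j = Λ j := by
          intro j hj1 hj2
          apply hoff
          omega
        have hvx : Λ' t = Λ t := hoffall t (by omega) (by omega)
        refine ⟨mem_maxF.2 ⟨htr, ⟨tm, tp, ht1, ht2, ht3, ?_, ?_, ?_⟩⟩, hvx⟩
        · rw [← hoffall tm le_rfl (by omega), ← hoffall (tm+1) (by omega) (by omega)]
          exact ht4
        · rw [← hoffall tp (by omega) le_rfl, ← hoffall (tp-1) (by omega) (by omega)]
          exact ht5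
        · intro j hj1 hj2
          rw [← hoffall j (by omega) (by omega), ← hvx]
          exact hplat j hj1 hj2
    rw [widthList_eq, widthList_eq]
    have hmc : (maxF N Λ').val.map Λ' = (maxF N Λ').val.map Λ := by
      apply Multiset.map_congr rfl
      intro u hu
      exact (hsub u hu).2
    rw [hmc]
    apply desc_le_of_le
    apply Multiset.map_le_map
    rw [Finset.val_le_iff]
    intro u hu
    exact (hsub u hu).1
  · -- x > R : strict drop via widthDrop
    left
    refine widthDrop (c := h₀ - 1) (d := h₀ + 1) (M₀ := Λ h₀) (by omega) ?_ ?_ ?_ ?_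
      (t₀ := h₀) (by omega) (by omega) (by omega) ?_ rfl
    · intro h hh
      exact hoff h (by omega)
    · intro h hh1 hh2
      have : h = h₀ := by omega
      subst this
      exact ⟨by linarith, le_rfl⟩
    · exact hLx
    · exact hxR
    · refine ⟨h₀ - 1, h₀ + 1, by omega, by omega, h2, ?_, ?_, ?_⟩
      · have : h₀ - 1 + 1 = h₀ := by omega
        rw [this]; exact hLx
      · have : h₀ + 1 - 1 = h₀ := by omega
        rw [this]; exact hxR
      · intro j hj1 hj2
        have : j = h₀ := by omega
        rw [this]

end Stmt11
namespace Stmt11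

lemma isMaxAt_congr {N t : ℕ} {f g : ℕ → ℝ} (h : ∀ j, j ≤ N → f j = g j)
    (hm : IsMaxAt N f t) : IsMaxAt N g t := by
  obtain ⟨tm, tp, h1, h2, h3, h4, h5, hplat⟩ := hm
  refine ⟨tm, tp, h1, h2, h3, ?_, ?_, ?_⟩
  · rw [← h tm (by omega), ← h (tm+1) (by omega)]; exact h4
  · rw [← h tp (by omega), ← h (tp-1) (by omega)]; exact h5
  · intro j hj1 hj2
    rw [← h j (by omega), ← h t (by omega)]
    exact hplat j hj1 hj2

lemma isMaxAt_reflect {N t : ℕ} {Λ : ℕ → ℝ} (ht : t ≤ N) (h : IsMaxAt N Λ t) :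
    IsMaxAt N (fun j => Λ (N - j)) (N - t) := by
  obtain ⟨tm, tp, h1, h2, h3, h4, h5, hplat⟩ := h
  refine ⟨N - tp, N - tm, by omega, by omega, by omega, ?_, ?_, ?_⟩
  · show Λ (N - (N - tp)) < Λ (N - (N - tp + 1))
    have e1 : N - (N - tp) = tp := by omega
    have e2 : N - (N - tp + 1) = tp - 1 := by omega
    rw [e1, e2]; exact h5
  · show Λ (N - (N - tm)) < Λ (N - (N - tm - 1))
    have e1 : N - (N - tm) = tm := by omega
    have e2 : N - (N - tm - 1) = tm + 1 := by omega
    rw [e1, e2]; exact h4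
  · intro j hj1 hj2
    show Λ (N - j) = Λ (N - (N - t))
    have e1 : N - (N - t) = t := by omega
    rw [e1]
    exact hplat (N - j) (by omega) (by omega)

lemma widthList_reflect (N : ℕ) (Λ : ℕ → ℝ) :
    widthList N (fun j => Λ (N - j)) = widthList N Λ := by
  rw [widthList_eq, widthList_eq]
  congr 1
  have himg : maxF N (fun j => Λ (N - j)) = (maxF N Λ).image (fun t => N - t) := by
    ext u
    rw [mem_maxF, Finset.mem_image]
    constructor
    · rintro ⟨hu1, hu2⟩
      refine ⟨N - u, mem_maxF.2 ⟨by omega, ?_⟩, by omega⟩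
      have h2 := isMaxAt_reflect (N := N) (Λ := fun j => Λ (N - j)) (t := u) (by omega) hu2
      exact isMaxAt_congr (fun j hj => by show Λ (N - (N - j)) = Λ j; congr 1; omega) h2
    · rintro ⟨v, hv, rfl⟩
      obtain ⟨hv1, hv2⟩ := mem_maxF.1 hv
      exact ⟨by omega, isMaxAt_reflect (by omega) hv2⟩
  rw [himg, Finset.image_val_of_injOn (by
    intro u hu v hv huv
    have hu' := mem_maxF.1 (by exact hu)
    have hv' := mem_maxF.1 (by exact hv)
    simp only at huv
    omega)]
  rw [Multiset.map_map]
  apply Multiset.map_congr rfl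
  intro x hx
  have hx' : x ∈ maxF N Λ := hx
  have := (mem_maxF.1 hx').1
  show Λ (N - (N - x)) = Λ x
  congr 1
  omega

end Stmt11
namespace Stmt11

variable {Brick Facet : Type} [Fintype Brick] [DecidableEq Brick]
  [Fintype Facet] [DecidableEq Facet]

def surfOf (bricksOf : Facet → Finset Brick) (X : Finset Brick) : Finset Facet :=
  univ.filter (fun f => (∃ T ∈ bricksOf f, T ∈ X) ∧ ∃ T ∈ bricksOf f, T ∉ X)

lemma levelSurf_eq (bricksOf : Facet → Finset Brick) {N : ℕ} (O : Fin N ≃ Brick) (j : ℕ) :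
    levelSurf bricksOf O j = surfOf bricksOf (sublevel O j) := rfl

lemma mem_surfOf {bricksOf : Facet → Finset Brick} {X : Finset Brick} {f : Facet} :
    f ∈ surfOf bricksOf X ↔ (∃ T ∈ bricksOf f, T ∈ X) ∧ ∃ T ∈ bricksOf f, T ∉ X := by
  simp [surfOf]

lemma mem_intFacets {bricksOf : Facet → Finset Brick} {A : Brick} {f : Facet} :
    f ∈ intFacets bricksOf A ↔ A ∈ bricksOf f ∧ (bricksOf f).card = 2 := by
  simp [intFacets]

lemma wt_mono {ω : Facet → ℝ} (hω : ∀ f, 0 ≤ ω f) {S T : Finset Facet} (h : S ⊆ T) :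
    wt ω S ≤ wt ω T :=
  Finset.sum_le_sum_of_subset_of_nonneg h (fun i _ _ => hω i)

lemma surf_erase {bricksOf : Facet → Finset Brick}
    (hBC : ∀ f, (bricksOf f).card = 1 ∨ (bricksOf f).card = 2)
    {A : Brick} {X : Finset Brick} (hA : A ∈ X) :
    surfOf bricksOf (X.erase A) =
      ((surfOf bricksOf X) \ (intFacets bricksOf A)) ∪
      ((intFacets bricksOf A) \ (surfOf bricksOf X)) := by
  ext f
  simp only [Finset.mem_union, Finset.mem_sdiff, mem_surfOf, mem_intFacets]
  by_cases hAf : A ∈ bricksOf f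
  · rcases hBC f with hc | hc
    · -- bricksOf f = {A}
      obtain ⟨a, ha⟩ := Finset.card_eq_one.1 hc
      have hall : ∀ T ∈ bricksOf f, T = A := by
        intro T hT
        rw [ha, Finset.mem_singleton] at hT hAf
        rw [hT, hAf]
      have hD : ¬ (A ∈ bricksOf f ∧ (bricksOf f).card = 2) := by
        rintro ⟨-, h2⟩
        omega
      have hS : ¬ ((∃ T ∈ bricksOf f, T ∈ X) ∧ ∃ T ∈ bricksOf f, T ∉ X) := by
        rintro ⟨-, T', hT', hT'X⟩
        rw [hall T' hT'] at hT'X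
        exact hT'X hA
      constructor
      · rintro ⟨⟨T, hT, hTe⟩, -⟩
        exact absurd (hall T hT) (Finset.mem_erase.1 hTe).1
      · rintro (⟨hs, -⟩ | ⟨hd, -⟩)
        · exact absurd hs hS
        · exact absurd hd hD
    · -- bricksOf f = {A, b'}
      obtain ⟨a, b, hab, habs⟩ := Finset.card_eq_two.1 hc
      obtain ⟨b', hbA, hbs⟩ : ∃ b', b' ≠ A ∧ bricksOf f = {A, b'} := by
        have hAab : A = a ∨ A = b := by
          rw [habs] at hAf
          simpa using hAf
        rcases hAab with rfl | rfl
        · exact ⟨b, fun h => hab h.symm, habs⟩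
        · exact ⟨a, fun h => hab h, by rw [habs, Finset.pair_comm]⟩
      have hmem : ∀ T, T ∈ bricksOf f ↔ T = A ∨ T = b' := by
        intro T
        rw [hbs]
        simp
      have hD : A ∈ bricksOf f ∧ (bricksOf f).card = 2 := ⟨hAf, hc⟩
      have hSiff : ((∃ T ∈ bricksOf f, T ∈ X) ∧ ∃ T ∈ bricksOf f, T ∉ X) ↔ b' ∉ X := by
        constructor
        · rintro ⟨-, T', hT', hT'X⟩
          rcases (hmem T').1 hT' with rfl | rfl
          · exact absurd hA hT'X
          · exact hT'X
        · intro h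
          exact ⟨⟨A, (hmem A).2 (Or.inl rfl), hA⟩, ⟨b', (hmem b').2 (Or.inr rfl), h⟩⟩
      have hLiff : ((∃ T ∈ bricksOf f, T ∈ X.erase A) ∧ ∃ T ∈ bricksOf f, T ∉ X.erase A) ↔
          b' ∈ X := by
        constructor
        · rintro ⟨⟨T, hT, hTe⟩, -⟩
          rcases (hmem T).1 hT with rfl | rfl
          · exact absurd rfl (Finset.mem_erase.1 hTe).1
          · exact (Finset.mem_erase.1 hTe).2
        · intro h
          refine ⟨⟨b', (hmem b').2 (Or.inr rfl), Finset.mem_erase.2 ⟨hbA, h⟩⟩,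
            ⟨A, (hmem A).2 (Or.inl rfl), fun he => (Finset.mem_erase.1 he).1 rfl⟩⟩
      rw [hLiff, hSiff]
      by_cases hbX : b' ∈ X
      · simp [hbX, hD]
      · simp [hbX, hD]
  · have hD : ¬ (A ∈ bricksOf f ∧ (bricksOf f).card = 2) := fun h => hAf h.1
    have hne : ∀ T ∈ bricksOf f, T ≠ A := by
      intro T hT he
      exact hAf (he ▸ hT)
    have h1 : (∃ T ∈ bricksOf f, T ∈ X.erase A) ↔ ∃ T ∈ bricksOf f, T ∈ X := by
      constructor
      · rintro ⟨T, hT, hTe⟩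
        exact ⟨T, hT, (Finset.mem_erase.1 hTe).2⟩
      · rintro ⟨T, hT, hTX⟩
        exact ⟨T, hT, Finset.mem_erase.2 ⟨hne T hT, hTX⟩⟩
    have h2 : (∃ T ∈ bricksOf f, T ∉ X.erase A) ↔ ∃ T ∈ bricksOf f, T ∉ X := by
      constructor
      · rintro ⟨T, hT, hTe⟩
        refine ⟨T, hT, fun h => hTe (Finset.mem_erase.2 ⟨hne T hT, h⟩)⟩
      · rintro ⟨T, hT, hTX⟩
        exact ⟨T, hT, fun h => hTX (Finset.mem_erase.1 h).2⟩
    rw [h1, h2]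
    constructor
    · intro h
      exact Or.inl ⟨h, hD⟩
    · rintro (⟨hs, -⟩ | ⟨hd, -⟩)
      · exact hs
      · exact absurd hd hD

lemma wt_surf_erase {ω : Facet → ℝ} {bricksOf : Facet → Finset Brick}
    (hBC : ∀ f, (bricksOf f).card = 1 ∨ (bricksOf f).card = 2)
    {A : Brick} {X : Finset Brick} (hA : A ∈ X) :
    wt ω (surfOf bricksOf (X.erase A)) =
      wt ω (surfOf bricksOf X) + strength ω (intFacets bricksOf A) (surfOf bricksOf X) := by
  rw [surf_erase hBC hA]
  set S := surfOf bricksOf X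
  set D := intFacets bricksOf A
  rw [wt, Finset.sum_union disjoint_sdiff_sdiff]
  have h1 : ∑ f ∈ S \ D, ω f = ∑ f ∈ S, ω f - ∑ f ∈ S ∩ D, ω f := by
    rw [← Finset.sdiff_inter_self_left S D]
    exact Finset.sum_sdiff_eq_sub (Finset.inter_subset_left)
  rw [h1, strength, wt, wt, wt, Finset.inter_comm]
  ring

lemma surf_mem_iff {bricksOf : Facet → Finset Brick} {A : Brick} {X : Finset Brick}
    (hA : A ∈ X) {f : Facet} (hf : A ∈ bricksOf f) :
    f ∈ surfOf bricksOf X ↔ ∃ T ∈ bricksOf f, T ∉ X := by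
  rw [mem_surfOf]
  exact ⟨fun h => h.2, fun h => ⟨⟨A, hf, hA⟩, h⟩⟩

lemma strength_mono {ω : Facet → ℝ} (hω : ∀ f, 0 ≤ ω f) {bricksOf : Facet → Finset Brick}
    {A : Brick} {X Y : Finset Brick} (hA : A ∈ X) (hXY : X ⊆ Y) :
    strength ω (intFacets bricksOf A) (surfOf bricksOf X) ≤
      strength ω (intFacets bricksOf A) (surfOf bricksOf Y) := by
  have hAY : A ∈ Y := hXY hA
  set D := intFacets bricksOf A with hD
  have h1 : D ∩ surfOf bricksOf Y ⊆ D ∩ surfOf bricksOf X := by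
    intro f hf
    rw [Finset.mem_inter] at hf ⊢
    obtain ⟨hfD, hfS⟩ := hf
    have hAf : A ∈ bricksOf f := (mem_intFacets.1 hfD).1
    refine ⟨hfD, (surf_mem_iff hA hAf).2 ?_⟩
    obtain ⟨T, hT, hTX⟩ := (surf_mem_iff hAY hAf).1 hfS
    exact ⟨T, hT, fun h => hTX (hXY h)⟩
  have h2 : D \ surfOf bricksOf X ⊆ D \ surfOf bricksOf Y := by
    intro f hf
    rw [Finset.mem_sdiff] at hf ⊢
    obtain ⟨hfD, hfS⟩ := hf
    have hAf : A ∈ bricksOf f := (mem_intFacets.1 hfD).1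
    refine ⟨hfD, fun hfY => hfS ?_⟩
    obtain ⟨T, hT, hTY⟩ := (surf_mem_iff hAY hAf).1 hfY
    exact (surf_mem_iff hA hAf).2 ⟨T, hT, fun h => hTY (hXY h)⟩
  have := wt_mono hω h1
  have := wt_mono hω h2
  rw [strength, strength]
  linarith

lemma mem_sublevel {N : ℕ} {O : Fin N ≃ Brick} {j : ℕ} {T : Brick} :
    T ∈ sublevel O j ↔ ((O.symm T : Fin N) : ℕ) + 1 ≤ j := by
  simp [sublevel]

lemma sublevel_mono {N : ℕ} (O : Fin N ≃ Brick) {j j' : ℕ} (h : j ≤ j') :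
    sublevel O j ⊆ sublevel O j' := by
  intro T hT
  rw [mem_sublevel] at hT ⊢
  omega

lemma sublevel_pred {N : ℕ} (O : Fin N ≃ Brick) (A : Brick) (a : ℕ)
    (ha : ((O.symm A : Fin N) : ℕ) + 1 = a) :
    sublevel O (a - 1) = (sublevel O a).erase A := by
  ext T
  rw [mem_sublevel, Finset.mem_erase, mem_sublevel]
  constructor
  · intro h
    refine ⟨fun he => ?_, by omega⟩
    subst he
    omega
  · rintro ⟨hne, h⟩
    have : (O.symm T : ℕ) ≠ (O.symm A : ℕ) := by
      intro he
      apply hne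
      have : O.symm T = O.symm A := Fin.ext he
      have := congrArg O this
      simpa using this
    omega

lemma sublevel_swap {N : ℕ} (O : Fin N ≃ Brick) (q : Fin N) (hq : (q : ℕ) + 1 < N) :
    (∀ j, j ≠ (q : ℕ) + 1 →
      sublevel ((Equiv.swap q ⟨(q : ℕ) + 1, hq⟩).trans O) j = sublevel O j) ∧
    sublevel ((Equiv.swap q ⟨(q : ℕ) + 1, hq⟩).trans O) ((q : ℕ) + 1) =
      (sublevel O ((q : ℕ) + 2)).erase (O q) := by
  set q' : Fin N := ⟨(q : ℕ) + 1, hq⟩ with hq'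
  have hq'v : ((q' : Fin N) : ℕ) = (q : ℕ) + 1 := rfl
  have hsymm : ∀ T, (((Equiv.swap q q').trans O).symm T) = Equiv.swap q q' (O.symm T) := by
    intro T
    rw [Equiv.symm_trans_apply, Equiv.symm_swap]
  have hqq' : q ≠ q' := by
    intro h
    have : (q : ℕ) = ((q' : Fin N) : ℕ) := congrArg _ h
    omega
  have hTq : ∀ T, (T ≠ O q) ↔ O.symm T ≠ q := by
    intro T
    constructor
    · intro h he
      exact h (by rw [← he]; simp)
    · intro h he
      exact h (by rw [he]; simp)
  constructor
  · intro j hj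
    ext T
    rw [mem_sublevel, mem_sublevel, hsymm]
    by_cases h1 : O.symm T = q
    · rw [h1, Equiv.swap_apply_left]
      omega
    · by_cases h2 : O.symm T = q'
      · rw [h2, Equiv.swap_apply_right]
        omega
      · rw [Equiv.swap_apply_of_ne_of_ne h1 h2]
  · ext T
    rw [mem_sublevel, Finset.mem_erase, mem_sublevel, hsymm]
    by_cases h1 : O.symm T = q
    · rw [h1, Equiv.swap_apply_left]
      constructor
      · intro h
        omega
      · rintro ⟨hne, -⟩
        exact absurd h1 ((hTq T).1 hne)
    · by_cases h2 : O.symm T = q'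
      · rw [h2, Equiv.swap_apply_right]
        constructor
        · intro h
          exact ⟨(hTq T).2 h1, by omega⟩
        · intro h
          omega
      · rw [Equiv.swap_apply_of_ne_of_ne h1 h2]
        constructor
        · intro h
          exact ⟨(hTq T).2 h1, by omega⟩
        · rintro ⟨hne, h⟩
          have hne' : O.symm T ≠ q := (hTq T).1 hne
          have hv : (O.symm T : ℕ) ≠ (q : ℕ) := fun he => hne' (Fin.ext he)
          omega

lemma surf_compl {bricksOf : Facet → Finset Brick} (X : Finset Brick) :
    surfOf bricksOf (univ \ X) = surfOf bricksOf X := by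
  ext f
  rw [mem_surfOf, mem_surfOf]
  have : ∀ T : Brick, T ∈ univ \ X ↔ T ∉ X := by
    intro T; rw [Finset.mem_sdiff]; simp
  constructor
  · rintro ⟨⟨T, hT, hTX⟩, ⟨T', hT', hT'X⟩⟩
    refine ⟨⟨T', hT', ?_⟩, ⟨T, hT, (this T).1 hTX⟩⟩
    by_contra h
    exact hT'X ((this T').2 h)
  · rintro ⟨⟨T, hT, hTX⟩, ⟨T', hT', hT'X⟩⟩
    exact ⟨⟨T', hT', (this T').2 hT'X⟩, ⟨T, hT, fun h => ((this T).1 h) hTX⟩⟩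

end Stmt11
namespace Stmt11

lemma Lam_eq {Brick Facet : Type} [Fintype Brick] [DecidableEq Brick]
    [Fintype Facet] [DecidableEq Facet]
    (ω : Facet → ℝ) (bricksOf : Facet → Finset Brick) {N : ℕ} (O : Fin N ≃ Brick) (j : ℕ) :
    Lam ω bricksOf O j = wt ω (surfOf bricksOf (sublevel O j)) := rfl

lemma core_below {Brick Facet : Type} [Fintype Brick] [DecidableEq Brick]
    [Fintype Facet] [DecidableEq Facet]
    (ω : Facet → ℝ) (hω : ∀ f, 0 ≤ ω f)
    (bricksOf : Facet → Finset Brick)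
    (hBC : ∀ f, (bricksOf f).card = 1 ∨ (bricksOf f).card = 2)
    {N : ℕ} (O : Fin N ≃ Brick) (hthin : LocallyThin ω bricksOf O)
    (k : ℕ) (hk : IsMinAt N (Lam ω bricksOf O) k)
    (A : Brick) (hAbelow : A ∈ sublevel O k)
    (hstrict : strength ω (intFacets bricksOf A) (levelSurf bricksOf O k) < 0) : False := by
  classical
  set Λ : ℕ → ℝ := Lam ω bricksOf O with hΛ
  obtain ⟨tm, tp, htm, htp, htpN, hdrop, hrise, hplat⟩ := hk
  set a : ℕ := ((O.symm A : Fin N) : ℕ) + 1 with ha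
  have ha1 : 1 ≤ a := by omega
  have hak : a ≤ k := mem_sublevel.1 hAbelow
  have hkN : k + 1 ≤ N := by omega
  -- strength at sublevels
  set σf : ℕ → ℝ := fun j => strength ω (intFacets bricksOf A) (surfOf bricksOf (sublevel O j))
    with hσf
  have hmemA : ∀ j, a ≤ j → A ∈ sublevel O j := by
    intro j hj
    rw [mem_sublevel]
    omega
  have hσ_mono : ∀ j j', a ≤ j → j ≤ j' → σf j ≤ σf j' := by
    intro j j' hj hjj
    exact strength_mono hω (hmemA j hj) (sublevel_mono O hjj)
  have hσk : σf k < 0 := by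
    rw [hσf]
    simpa [levelSurf_eq] using hstrict
  have hσ : ∀ j, a ≤ j → j ≤ k → σf j < 0 := by
    intro j hj hjk
    exact lt_of_le_of_lt (hσ_mono j k hj hjk) hσk
  -- the basic identity Λ (j-1) = Λ j + σ j  in the original ordering at j = a
  have hida : Λ (a - 1) = Λ a + σf a := by
    rw [hΛ, Lam_eq, Lam_eq, sublevel_pred O A a rfl]
    exact wt_surf_erase hBC (hmemA a le_rfl)
  have hLam_lt : Λ (a - 1) < Λ a := by
    have := hσ a le_rfl hak
    rw [hida]
    linarith
  have hplatk : ∀ j, tm < j → j < tp → Λ j = Λ k := hplat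
  have hatm : a ≤ tm := by
    by_contra hcon
    push_neg at hcon
    rcases Nat.lt_or_ge tm (a - 1) with h1 | h1
    · have e1 : Λ (a-1) = Λ k := hplatk (a-1) h1 (by omega)
      have e2 : Λ a = Λ k := hplatk a (by omega) (by omega)
      rw [e1, e2] at hLam_lt
      exact lt_irrefl _ hLam_lt
    · have e1 : a - 1 = tm := by omega
      have e2 : tm + 1 = a := by omega
      rw [e1] at hLam_lt
      rw [e2] at hdrop
      exact lt_irrefl _ (lt_trans hLam_lt hdrop)
  have hΛkM : Λ k < Λ tm := by
    have := hplatk (tm+1) (by omega) (by omega)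
    rw [← this]
    exact hdrop
  -- the moving chain
  have chain : ∀ i, i ≤ k - a → ∃ Oi : Fin N ≃ Brick,
      ThinsTo ω bricksOf O Oi ∧
      ((Oi.symm A : Fin N) : ℕ) = a - 1 + i ∧
      (∀ j, j < a ∨ a + i ≤ j → sublevel Oi j = sublevel O j) ∧
      (∀ j, a ≤ j → j < a + i → sublevel Oi j = (sublevel O (j+1)).erase A) := by
    intro i
    induction i with
    | zero =>
      intro _
      refine ⟨O, Relation.ReflTransGen.refl, by omega, fun j _ => rfl, fun j hj1 hj2 => by omega⟩
    | succ i ih =>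
      intro hi
      obtain ⟨Oi, hthins, hidx, hout, hin⟩ := ih (by omega)
      have haiN : a + i < N := by omega
      have haik : a + i + 1 ≤ k := by omega
      set q : Fin N := ⟨a - 1 + i, by omega⟩ with hqdef
      have hq : (q : ℕ) + 1 < N := by
        show a - 1 + i + 1 < N
        omega
      set O' : Fin N ≃ Brick := (Equiv.swap q ⟨(q : ℕ) + 1, hq⟩).trans Oi with hO'
      have hq1 : (q : ℕ) + 1 = a + i := by
        show a - 1 + i + 1 = a + i
        omega
      obtain ⟨hsw1, hsw2⟩ := sublevel_swap Oi q hq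
      have hOiqs : Oi.symm A = q := by
        apply Fin.ext
        rw [hidx]
      have hOiq : Oi q = A := by
        rw [← hOiqs]
        simp
      -- new sublevel descriptions
      have hout' : ∀ j, j < a ∨ a + (i+1) ≤ j → sublevel O' j = sublevel O j := by
        intro j hj
        rw [hO', hsw1 j (by omega), hout j (by omega)]
      have hin' : ∀ j, a ≤ j → j < a + (i+1) → sublevel O' j = (sublevel O (j+1)).erase A := by
        intro j hj1 hj2
        rcases Nat.lt_or_ge j (a+i) with hj3 | hj3
        · rw [hO', hsw1 j (by omega), hin j hj1 hj3]
        · have hji : j = a + i := by omega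
          subst hji
          have h2 : sublevel O' (a+i) = (sublevel Oi (a+i+1)).erase A := by
            have e2 : a + i + 1 = (q : ℕ) + 2 := by omega
            have e1 : a + i = (q : ℕ) + 1 := hq1.symm
            rw [hO', e2, e1, ← hOiq]
            exact hsw2
          rw [h2, hout (a+i+1) (by omega)]
      have hidx' : ((O'.symm A : Fin N) : ℕ) = a - 1 + (i+1) := by
        rw [hO', Equiv.symm_trans_apply, Equiv.symm_swap, hOiqs, Equiv.swap_apply_left]
        show (q : ℕ) + 1 = a - 1 + (i + 1)
        omega
      -- Lam values for Oi
      have hLam_out : ∀ j, j < a ∨ a + i ≤ j → Lam ω bricksOf Oi j = Λ j := by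
        intro j hj
        rw [Lam_eq, hout j hj, hΛ, Lam_eq]
      have hLam_in : ∀ j, a ≤ j → j < a + i → Lam ω bricksOf Oi j = Λ (j+1) + σf (j+1) := by
        intro j hj1 hj2
        rw [Lam_eq, hin j hj1 hj2, wt_surf_erase hBC (hmemA (j+1) (by omega)), hΛ, Lam_eq, hσf]
      have hLam_out' : ∀ j, j < a ∨ a + (i+1) ≤ j → Lam ω bricksOf O' j = Λ j := by
        intro j hj
        rw [Lam_eq, hout' j hj, hΛ, Lam_eq]
      have hLam_in' : ∀ j, a ≤ j → j < a + (i+1) → Lam ω bricksOf O' j = Λ (j+1) + σf (j+1) := by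
        intro j hj1 hj2
        rw [Lam_eq, hin' j hj1 hj2, wt_surf_erase hBC (hmemA (j+1) (by omega)), hΛ, Lam_eq, hσf]
      -- width non-increase for this step
      have hwle : WidthLE (widthList N (Lam ω bricksOf O')) (widthList N (Lam ω bricksOf Oi)) := by
        apply stepWidth (h₀ := a + i) (s := σf (a+i)) (s' := σf (a+i+1)) (by omega) (by omega)
        · intro j hj
          rcases Nat.lt_or_ge j a with h1 | h1
          · rw [hLam_out' j (Or.inl h1), hLam_out j (Or.inl h1)]
          · rcases Nat.lt_or_ge j (a+i) with h2 | h2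
            · rw [hLam_in' j h1 (by omega), hLam_in j h1 h2]
            · have h3 : a + (i+1) ≤ j := by omega
              rw [hLam_out' j (Or.inr h3), hLam_out j (Or.inr (by omega))]
        · exact hσ_mono (a+i) (a+i+1) (by omega) (by omega)
        · exact hσ (a+i+1) (by omega) haik
        · -- Lam Oi (a+i-1) = Lam Oi (a+i) + σf (a+i)
          have hR : Lam ω bricksOf Oi (a+i) = Λ (a+i) := hLam_out (a+i) (Or.inr le_rfl)
          rcases Nat.eq_zero_or_pos i with hi0 | hi0
          · subst hi0
            rw [hR]
            have : Lam ω bricksOf Oi (a + 0 - 1) = Λ (a - 1) := by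
              rw [hLam_out (a + 0 - 1) (Or.inl (by omega))]
            rw [this]
            have ee : a + 0 = a := by omega
            rw [ee, hida]
          · have : Lam ω bricksOf Oi (a+i-1) = Λ (a+i-1+1) + σf (a+i-1+1) :=
              hLam_in (a+i-1) (by omega) (by omega)
            rw [hR, this]
            have ee : a + i - 1 + 1 = a + i := by omega
            rw [ee]
        · -- Lam O' (a+i) = Lam Oi (a+i+1) + σf (a+i+1)
          rw [hLam_in' (a+i) (by omega) (by omega), hLam_out (a+i+1) (Or.inr (by omega))]
      have hstep : ThinStep ω bricksOf Oi O' := ⟨⟨q, hq, rfl⟩, hwle⟩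
      exact ⟨O', hthins.tail hstep, hidx', hout', hin'⟩
  -- final ordering
  obtain ⟨Of, hthins, hidxf, houtf, hinf⟩ := chain (k - a) le_rfl
  have hka : a + (k - a) = k := by omega
  rw [hka] at houtf hinf
  set Λf : ℕ → ℝ := Lam ω bricksOf Of with hΛf
  have hfout : ∀ j, j < a ∨ k ≤ j → Λf j = Λ j := by
    intro j hj
    rw [hΛf, Lam_eq, houtf j hj, hΛ, Lam_eq]
  have hfin : ∀ j, a ≤ j → j < k → Λf j = Λ (j+1) + σf (j+1) := by
    intro j hj1 hj2
    rw [hΛf, Lam_eq, hinf j hj1 hj2, wt_surf_erase hBC (hmemA (j+1) (by omega)), hΛ, Lam_eq, hσf]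
  -- the maximum over [a, tm]
  have hIcc : (Finset.Icc a tm).Nonempty := ⟨a, by simp [Finset.mem_Icc]; omega⟩
  set M₀ : ℝ := ((Finset.Icc a tm).image Λ).max' (hIcc.image Λ) with hM₀
  have hle : ∀ j, a ≤ j → j ≤ tm → Λ j ≤ M₀ := by
    intro j hj1 hj2
    apply Finset.le_max'
    exact Finset.mem_image_of_mem Λ (Finset.mem_Icc.2 ⟨hj1, hj2⟩)
  have hup : ∀ j, a ≤ j → j ≤ k → Λ j ≤ M₀ := by
    intro j hj1 hj2
    rcases Nat.lt_or_ge tm j with h1 | h1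
    · rcases Nat.lt_or_ge j tp with h2 | h2
      · rw [hplatk j h1 h2]
        have := hle tm hatm le_rfl
        linarith
      · omega
    · exact hle j hj1 h1
  have hΛa : Λ a ≤ M₀ := hle a le_rfl hatm
  have hΛkM0 : Λ k < M₀ := lt_of_lt_of_le hΛkM (hle tm hatm le_rfl)
  -- choose t* : last point of [a,tm] attaining M₀
  set T : Finset ℕ := (Finset.Icc a tm).filter (fun j => Λ j = M₀) with hT
  have hTne : T.Nonempty := by
    obtain ⟨x, hx, hxv⟩ := Finset.mem_image.1 (((Finset.Icc a tm).image Λ).max'_mem (hIcc.image Λ))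
    exact ⟨x, Finset.mem_filter.2 ⟨hx, hxv⟩⟩
  set t₀ : ℕ := T.max' hTne with ht₀
  have ht₀mem : t₀ ∈ T := T.max'_mem hTne
  rw [hT, Finset.mem_filter, Finset.mem_Icc] at ht₀mem
  obtain ⟨⟨hta, httm⟩, htv⟩ := ht₀mem
  have ht₀last : ∀ j, t₀ < j → j ≤ tm → Λ j ≠ M₀ := by
    intro j hj1 hj2 hv
    have : j ∈ T := Finset.mem_filter.2 ⟨Finset.mem_Icc.2 ⟨by omega, hj2⟩, hv⟩
    have := Finset.le_max' T j this
    omega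
  -- choose u : last point of [a-1, t₀-1] with Λ ≠ M₀
  set B : Finset ℕ := (Finset.Icc (a-1) (t₀-1)).filter (fun j => Λ j ≠ M₀) with hB
  have hBne : B.Nonempty := by
    refine ⟨a-1, Finset.mem_filter.2 ⟨Finset.mem_Icc.2 ⟨le_rfl, by omega⟩, ?_⟩⟩
    have : Λ (a-1) < M₀ := lt_of_lt_of_le hLam_lt hΛa
    exact ne_of_lt this
  set u : ℕ := B.max' hBne with hu
  have humem : u ∈ B := B.max'_mem hBne
  rw [hB, Finset.mem_filter, Finset.mem_Icc] at humem
  obtain ⟨⟨hua, hut⟩, hune⟩ := humem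
  have huplat : ∀ j, u < j → j ≤ t₀ - 1 → Λ j = M₀ := by
    intro j hj1 hj2
    by_contra hv
    have : j ∈ B := Finset.mem_filter.2 ⟨Finset.mem_Icc.2 ⟨by omega, hj2⟩, hv⟩
    have := Finset.le_max' B j this
    omega
  have huval : Λ u < M₀ := by
    rcases Nat.lt_or_ge u a with h1 | h1
    · have : u = a - 1 := by omega
      rw [this]
      exact lt_of_lt_of_le hLam_lt hΛa
    · exact lt_of_le_of_ne (hle u h1 (by omega)) hune
  have hmax : IsMaxAt N Λ t₀ := by
    refine ⟨u, t₀ + 1, by omega, by omega, by omega, ?_, ?_, ?_⟩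
    · have : Λ (u+1) = M₀ := by
        rcases Nat.lt_or_ge (u+1) t₀ with h1 | h1
        · exact huplat (u+1) (by omega) (by omega)
        · have : u + 1 = t₀ := by omega
          rw [this, htv]
      rw [this]
      exact huval
    · have e1 : t₀ + 1 - 1 = t₀ := by omega
      rw [e1, htv]
      rcases Nat.lt_or_ge t₀ tm with h1 | h1
      · have h2 := hle (t₀+1) (by omega) (by omega)
        have h3 := ht₀last (t₀+1) (by omega) (by omega)
        exact lt_of_le_of_ne h2 h3
      · have h2 : t₀ = tm := by omega
        rw [h2]
        calc Λ (tm+1) < Λ tm := hdrop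
        _ = M₀ := by rw [← h2, htv]
    · intro j hj1 hj2
      rcases Nat.lt_or_ge j t₀ with h1 | h1
      · rw [huplat j hj1 (by omega), htv]
      · have : j = t₀ := by omega
        rw [this]
  -- final width comparison
  have hdrop2 : WidthLT (widthList N Λf) (widthList N Λ) := by
    refine widthDrop (c := a - 1) (d := k) (M₀ := M₀) (by omega) ?_ ?_ ?_ ?_
      (t₀ := t₀) (by omega) (by omega) (by omega) hmax htv
    · intro h hh
      push_neg at hh
      rcases Nat.lt_or_ge h k with h1 | h1
      · exact hfout h (Or.inl (by omega))
      · exact hfout h (Or.inr h1)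
    · intro h hh1 hh2
      have hh3 : a ≤ h := by omega
      constructor
      · rw [hfin h hh3 hh2]
        have h4 := hσ (h+1) (by omega) (by omega)
        have h5 := hup (h+1) (by omega) (by omega)
        linarith
      · exact hup h hh3 (by omega)
    · have : a - 1 < a := by omega
      exact lt_of_lt_of_le hLam_lt hΛa
    · exact hΛkM0
  exact hthin Of hthins hdrop2

end Stmt11
namespace Stmt11

variable {Brick Facet : Type} [Fintype Brick] [DecidableEq Brick]
  [Fintype Facet] [DecidableEq Facet]

def revO {N : ℕ} (O : Fin N ≃ Brick) : Fin N ≃ Brick := Fin.revPerm.trans O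

lemma revO_revO {N : ℕ} (O : Fin N ≃ Brick) : revO (revO O) = O := by
  apply Equiv.ext
  intro x
  simp [revO, Fin.rev_rev]

lemma sublevel_rev {N : ℕ} (O : Fin N ≃ Brick) (j : ℕ) :
    sublevel (revO O) j = univ \ sublevel O (N - j) := by
  ext T
  rw [mem_sublevel, Finset.mem_sdiff, mem_sublevel]
  have hsymm : (revO O).symm T = Fin.rev (O.symm T) := by
    rw [revO, Equiv.symm_trans_apply, Fin.revPerm_symm, Fin.revPerm_apply]
  rw [hsymm, Fin.val_rev]
  have hlt : ((O.symm T : Fin N) : ℕ) < N := (O.symm T).isLt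
  constructor
  · intro h
    refine ⟨Finset.mem_univ T, ?_⟩
    omega
  · rintro ⟨-, h⟩
    omega

lemma Lam_rev (ω : Facet → ℝ) (bricksOf : Facet → Finset Brick) {N : ℕ}
    (O : Fin N ≃ Brick) (j : ℕ) :
    Lam ω bricksOf (revO O) j = Lam ω bricksOf O (N - j) := by
  rw [Lam_eq, Lam_eq, sublevel_rev, surf_compl]

lemma width_rev (ω : Facet → ℝ) (bricksOf : Facet → Finset Brick) {N : ℕ}
    (O : Fin N ≃ Brick) :
    widthList N (Lam ω bricksOf (revO O)) = widthList N (Lam ω bricksOf O) := by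
  have h : Lam ω bricksOf (revO O) = (fun j => Lam ω bricksOf O (N - j)) := by
    funext j
    exact Lam_rev ω bricksOf O j
  rw [h, widthList_reflect]

lemma thinStep_rev (ω : Facet → ℝ) (bricksOf : Facet → Finset Brick) {N : ℕ}
    {X Y : Fin N ≃ Brick} (h : ThinStep ω bricksOf X Y) :
    ThinStep ω bricksOf (revO X) (revO Y) := by
  obtain ⟨⟨i, hi, rfl⟩, hwle⟩ := h
  set i1 : Fin N := ⟨(i : ℕ) + 1, hi⟩ with hi1
  have hv1 : (i1 : ℕ) = (i : ℕ) + 1 := rfl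
  have hj : ((Fin.rev i1 : Fin N) : ℕ) + 1 < N := by
    rw [Fin.val_rev, hv1]
    omega
  constructor
  · refine ⟨Fin.rev i1, hj, ?_⟩
    have hji : (⟨((Fin.rev i1 : Fin N) : ℕ) + 1, hj⟩ : Fin N) = Fin.rev i := by
      apply Fin.ext
      show ((Fin.rev i1 : Fin N) : ℕ) + 1 = ((Fin.rev i : Fin N) : ℕ)
      rw [Fin.val_rev, Fin.val_rev, hv1]
      omega
    rw [hji]
    apply Equiv.ext
    intro x
    show ((Equiv.swap i i1).trans X) (Fin.revPerm x) = (revO X) ((Equiv.swap i1.rev i.rev) x)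
    rw [Equiv.trans_apply, revO, Equiv.trans_apply]
    congr 1
    rw [Fin.revPerm_apply, Fin.revPerm_apply]
    -- goal : swap i i1 x.rev = rev (swap i1.rev i.rev x)
    by_cases h1 : x = Fin.rev i1
    · subst h1
      rw [Fin.rev_rev, Equiv.swap_apply_right, Equiv.swap_apply_left, Fin.rev_rev]
    · by_cases h2 : x = Fin.rev i
      · subst h2
        rw [Fin.rev_rev, Equiv.swap_apply_left, Equiv.swap_apply_right, Fin.rev_rev]
      · rw [Equiv.swap_apply_of_ne_of_ne (fun hc => h2 (by rw [← hc, Fin.rev_rev]))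
            (fun hc => h1 (by rw [← hc, Fin.rev_rev])),
          Equiv.swap_apply_of_ne_of_ne h1 h2]
  · rw [width_rev, width_rev]
    exact hwle

lemma thinsTo_rev (ω : Facet → ℝ) (bricksOf : Facet → Finset Brick) {N : ℕ}
    {X Y : Fin N ≃ Brick} (h : ThinsTo ω bricksOf X Y) :
    ThinsTo ω bricksOf (revO X) (revO Y) :=
  Relation.ReflTransGen.lift revO (by intro a b hs; exact thinStep_rev ω bricksOf hs) _ _ h

lemma locallyThin_rev (ω : Facet → ℝ) (bricksOf : Facet → Finset Brick) {N : ℕ}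
    {O : Fin N ≃ Brick} (h : LocallyThin ω bricksOf O) :
    LocallyThin ω bricksOf (revO O) := by
  intro O' hth hlt
  have h1 : ThinsTo ω bricksOf O (revO O') := by
    have := thinsTo_rev ω bricksOf hth
    rwa [revO_revO] at this
  apply h (revO O') h1
  rw [width_rev] at hlt
  rw [width_rev]
  exact hlt

end Stmt11

open Stmt11

/-- if O is a locally thin ordering and k is a minimum of O, then the
level surface S_k is a stable minimal surface (admits no strict shortening move). -/
theorem stmt11 {Brick Facet : Type} [Fintype Brick] [DecidableEq Brick]
    [Fintype Facet] [DecidableEq Facet]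
    (ω : Facet → ℝ) (hω : ∀ f, 0 ≤ ω f)
    (bricksOf : Facet → Finset Brick)
    (hBC : ∀ f, (bricksOf f).card = 1 ∨ (bricksOf f).card = 2)
    {N : ℕ} (O : Fin N ≃ Brick) (hthin : LocallyThin ω bricksOf O)
    (k : ℕ) (hk : IsMinAt N (Lam ω bricksOf O) k) :
    StableMin ω bricksOf (levelSurf bricksOf O k) := by
  intro A hSS
  obtain ⟨hne, hstrict⟩ := hSS
  by_cases hA : A ∈ sublevel O k
  · exact core_below ω hω bricksOf hBC O hthin k hk A hA hstrict
  · obtain ⟨tm, tp, htm, htp, htpN, hdrop, hrise, hplat⟩ := hk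
    have hkN : k ≤ N := by omega
    have hNk : N - (N - k) = k := by omega
    have hrev : ∀ j, Lam ω bricksOf (revO O) j = Lam ω bricksOf O (N - j) :=
      Lam_rev ω bricksOf O
    have hmin : IsMinAt N (Lam ω bricksOf (revO O)) (N - k) := by
      refine ⟨N - tp, N - tm, by omega, by omega, by omega, ?_, ?_, ?_⟩
      · rw [hrev, hrev]
        have e1 : N - (N - tp + 1) = tp - 1 := by omega
        have e2 : N - (N - tp) = tp := by omega
        rw [e1, e2]; exact hrise
      · rw [hrev, hrev]
        have e1 : N - (N - tm - 1) = tm + 1 := by omega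
        have e2 : N - (N - tm) = tm := by omega
        rw [e1, e2]; exact hdrop
      · intro j hj1 hj2
        rw [hrev, hrev, hNk]
        exact hplat (N - j) (by omega) (by omega)
    have hsurf : levelSurf bricksOf (revO O) (N - k) = levelSurf bricksOf O k := by
      rw [levelSurf_eq, levelSurf_eq, sublevel_rev, hNk, surf_compl]
    have hbelow : A ∈ sublevel (revO O) (N - k) := by
      rw [sublevel_rev, hNk, Finset.mem_sdiff]
      exact ⟨Finset.mem_univ A, hA⟩
    apply core_below ω hω bricksOf hBC (revO O) (locallyThin_rev ω bricksOf hthin)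
      (N - k) hmin A hbelow
    rw [hsurf]
    exact hstrict
end

section
/- If (M, ω) is a weighted brick complex having at least one interior facet of positive weight, then M contains a proper surface that is either a stable minimal surface or an unstable minimal surface. -/
open Finset

open scoped symmDiff

section A
variable {Facet : Type} [DecidableEq Facet] {ω : Facet → ℝ} (hω : ∀ f, 0 ≤ ω f)


lemma wt_empty : wt ω (∅ : Finset Facet) = 0 := rfl

include hω in
lemma wt_nonneg (S : Finset Facet) : 0 ≤ wt ω S := Finset.sum_nonneg fun f _ => hω f

include hω in
lemma wt_mono {S T : Finset Facet} (h : S ⊆ T) : wt ω S ≤ wt ω T :=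
  Finset.sum_le_sum_of_subset_of_nonneg h fun f _ _ => hω f

include hω in
lemma le_wt {S : Finset Facet} {f : Facet} (hf : f ∈ S) : ω f ≤ wt ω S :=
  Finset.single_le_sum (fun g _ => hω g) hf

lemma nonempty_of_wt_pos {S : Finset Facet} (h : 0 < wt ω S) : S.Nonempty := by
  rcases S.eq_empty_or_nonempty with rfl | hne
  · simp [wt_empty] at h
  · exact hne

lemma wt_sdiff {S T : Finset Facet} (h : T ⊆ S) : wt ω (S \ T) = wt ω S - wt ω T := by
  have := Finset.sum_sdiff (f := ω) h
  unfold wt; linarith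

lemma wt_inter_add_sdiff (I S : Finset Facet) :
    wt ω (I ∩ S) + wt ω (I \ S) = wt ω I := by
  have : I \ S ∪ I ∩ S = I := Finset.sdiff_union_inter I S
  calc wt ω (I ∩ S) + wt ω (I \ S) = wt ω (I \ S ∪ I ∩ S) := by
        rw [eq_comm]
        unfold wt
        exact (Finset.sum_union (Finset.disjoint_sdiff_inter I S)).trans (by ring)
      _ = wt ω I := by rw [this]

lemma strength_eq (I S : Finset Facet) :
    strength ω I S = wt ω I - 2 * wt ω (I ∩ S) := by
  have := wt_inter_add_sdiff (ω := ω) I S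
  unfold strength; linarith

lemma wt_symmDiff (S I : Finset Facet) :
    wt ω (S ∆ I) = wt ω S + strength ω I S := by
  have h1 : S ∆ I = S \ I ∪ I \ S := rfl
  have hd : Disjoint (S \ I) (I \ S) := disjoint_sdiff_sdiff
  have h2 : wt ω (S ∆ I) = wt ω (S \ I) + wt ω (I \ S) := by
    rw [h1]; exact Finset.sum_union hd
  have h3 := wt_inter_add_sdiff (ω := ω) S I
  have h4 := wt_inter_add_sdiff (ω := ω) I S
  have h5 : S ∩ I = I ∩ S := Finset.inter_comm S I
  unfold strength
  rw [h2]
  rw [h5] at h3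
  linarith

end A

section B
variable {Brick Facet : Type} [Fintype Brick] [DecidableEq Brick] [Fintype Facet]
  [DecidableEq Facet] (bricksOf : Facet → Finset Brick)

/-- the cut surface of a set of bricks -/
def cutB (X : Finset Brick) : Finset Facet :=
  univ.filter (fun f => (∃ T ∈ bricksOf f, T ∈ X) ∧ ∃ T ∈ bricksOf f, T ∉ X)

variable {bricksOf}

lemma mem_cutB {X : Finset Brick} {f : Facet} :
    f ∈ cutB bricksOf X ↔ (∃ T ∈ bricksOf f, T ∈ X) ∧ ∃ T ∈ bricksOf f, T ∉ X := by
  simp [cutB]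

lemma cutB_empty : cutB bricksOf (∅ : Finset Brick) = ∅ := by
  ext f; simp [mem_cutB]

lemma mem_intFacets {A : Brick} {f : Facet} :
    f ∈ intFacets bricksOf A ↔ A ∈ bricksOf f ∧ (bricksOf f).card = 2 := by
  simp [intFacets]

lemma mem_commonFacets {A B : Brick} {f : Facet} :
    f ∈ commonFacets bricksOf A B ↔ A ∈ bricksOf f ∧ B ∈ bricksOf f := by
  simp [commonFacets]

variable (hBC : ∀ f : Facet, (bricksOf f).card = 1 ∨ (bricksOf f).card = 2)

include hBC in
lemma cutB_insert {X : Finset Brick} {B : Brick} (hB : B ∉ X) :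
    cutB bricksOf (insert B X) = (cutB bricksOf X) ∆ (intFacets bricksOf B) := by
  ext f
  rw [Finset.mem_symmDiff, mem_cutB, mem_cutB, mem_intFacets]
  rcases hBC f with h1 | h2
  · obtain ⟨T, hT⟩ := Finset.card_eq_one.mp h1
    have hc1 : (#({T} : Finset Brick) = 2) ↔ False := by simp
    simp only [hT, hc1, Finset.mem_singleton, Finset.mem_insert, exists_eq_left]
    by_cases hBT : B = T <;> simp only [hBT] <;> tauto
  · obtain ⟨T, U, hTU, hf⟩ := Finset.card_eq_two.mp h2
    have hc2 : (#({T, U} : Finset Brick) = 2) ↔ True := by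
      rw [← hf]; simp [h2]
    simp only [hf, hc2, Finset.mem_insert, Finset.mem_singleton, exists_eq_or_imp,
      exists_eq_left, and_true, true_and]
    by_cases hBT : B = T
    · subst hBT
      by_cases hUX : U ∈ X <;> tauto
    · by_cases hBU : B = U
      · subst hBU
        by_cases hTX : T ∈ X <;> tauto
      · have e1 : (T = B ∨ T ∈ X) ↔ T ∈ X := by
          simp only [or_iff_right_iff_imp]
          exact fun h => absurd h.symm hBT
        have e2 : (U = B ∨ U ∈ X) ↔ U ∈ X := by
          simp only [or_iff_right_iff_imp]
          exact fun h => absurd h.symm hBU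
        have e3 : (B = T ∨ B = U) ↔ False := by simp [hBT, hBU]
        simp only [e1, e2, e3, and_false, false_and, false_or, or_false]
        tauto

include hBC in
lemma cutB_erase {X : Finset Brick} {A : Brick} (hA : A ∈ X) :
    cutB bricksOf (X.erase A) = (cutB bricksOf X) ∆ (intFacets bricksOf A) := by
  have h1 : A ∉ X.erase A := Finset.notMem_erase A X
  have h2 : X = insert A (X.erase A) := (Finset.insert_erase hA).symm
  have := cutB_insert (bricksOf := bricksOf) hBC h1
  rw [← h2] at this
  rw [this, symmDiff_assoc, symmDiff_self, symmDiff_bot]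

include hBC in
lemma common_eq_inter {A B : Brick} (hAB : A ≠ B) :
    commonFacets bricksOf A B = intFacets bricksOf A ∩ intFacets bricksOf B := by
  ext f
  simp only [Finset.mem_inter, mem_commonFacets, mem_intFacets]
  constructor
  · rintro ⟨hA, hB⟩
    have hsub : {A, B} ⊆ bricksOf f := by
      intro x hx; rcases Finset.mem_insert.mp hx with rfl | hx
      · exact hA
      · exact (Finset.mem_singleton.mp hx) ▸ hB
    have h2 : 2 ≤ (bricksOf f).card := by
      have := Finset.card_le_card hsub
      rwa [Finset.card_pair hAB] at this
    have hc : (bricksOf f).card = 2 := by rcases hBC f with h | h <;> omega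
    exact ⟨⟨hA, hc⟩, ⟨hB, hc⟩⟩
  · rintro ⟨⟨hA, -⟩, ⟨hB, -⟩⟩; exact ⟨hA, hB⟩

lemma common_subset_cut {X : Finset Brick} {A B : Brick} (hA : A ∈ X) (hB : B ∉ X) :
    commonFacets bricksOf A B ⊆ cutB bricksOf X := by
  intro f hf
  rw [mem_commonFacets] at hf
  exact mem_cutB.mpr ⟨⟨A, hf.1, hA⟩, ⟨B, hf.2, hB⟩⟩

end B

section C
variable {Brick Facet : Type} [Fintype Brick] [DecidableEq Brick] [Fintype Facet]
  [DecidableEq Facet] {bricksOf : Facet → Finset Brick} {ω : Facet → ℝ}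
  (hω : ∀ f, 0 ≤ ω f)
  (hBC : ∀ f : Facet, (bricksOf f).card = 1 ∨ (bricksOf f).card = 2)

-- strength of B against S ∆ intA, when all common facets lie in S
include hω in
lemma strength_symmDiff_int {S : Finset Facet} {A B : Brick}
    (hsub : intFacets bricksOf A ∩ intFacets bricksOf B ⊆ S) :
    strength ω (intFacets bricksOf B) (S ∆ intFacets bricksOf A) =
      strength ω (intFacets bricksOf B) S
        + 2 * wt ω (intFacets bricksOf A ∩ intFacets bricksOf B) := by
  set IA := intFacets bricksOf A
  set IB := intFacets bricksOf B
  have hset : IB ∩ (S ∆ IA) = (IB ∩ S) \ (IA ∩ IB) := by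
    ext f
    simp only [Finset.mem_inter, Finset.mem_symmDiff, Finset.mem_sdiff]
    constructor
    · rintro ⟨hfB, (⟨hfS, hfA⟩ | ⟨hfA, hfS⟩)⟩
      · exact ⟨⟨hfB, hfS⟩, fun hc => hfA hc.1⟩
      · exact absurd (hsub (Finset.mem_inter.mpr ⟨hfA, hfB⟩)) hfS
    · rintro ⟨⟨hfB, hfS⟩, hno⟩
      exact ⟨hfB, Or.inl ⟨hfS, fun hfA => hno ⟨hfA, hfB⟩⟩⟩
  have hsub2 : IA ∩ IB ⊆ IB ∩ S := fun f hf =>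
    Finset.mem_inter.mpr ⟨(Finset.mem_inter.mp hf).2, hsub hf⟩
  rw [strength_eq, strength_eq, hset, wt_sdiff (ω := ω) hsub2]
  ring

-- monotonicity: A ∈ X ⊆ Y ⇒ σ(A; cut X) ≤ σ(A; cut Y)
include hω in
lemma strength_mono_mem {X Y : Finset Brick} {A : Brick} (hA : A ∈ X) (hXY : X ⊆ Y) :
    strength ω (intFacets bricksOf A) (cutB bricksOf X) ≤
      strength ω (intFacets bricksOf A) (cutB bricksOf Y) := by
  rw [strength_eq, strength_eq]
  have hsub : intFacets bricksOf A ∩ cutB bricksOf Y ⊆ intFacets bricksOf A ∩ cutB bricksOf X := by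
    intro f hf
    obtain ⟨hfA, hfY⟩ := Finset.mem_inter.mp hf
    obtain ⟨hAb, -⟩ := mem_intFacets.mp hfA
    obtain ⟨-, ⟨T, hT, hTY⟩⟩ := mem_cutB.mp hfY
    exact Finset.mem_inter.mpr ⟨hfA, mem_cutB.mpr ⟨⟨A, hAb, hA⟩, ⟨T, hT, fun h => hTY (hXY h)⟩⟩⟩
  have := wt_mono (ω := ω) hω hsub
  linarith

include hω in
lemma strength_anti_not_mem {X Y : Finset Brick} {B : Brick} (hB : B ∉ Y) (hXY : X ⊆ Y) :
    strength ω (intFacets bricksOf B) (cutB bricksOf Y) ≤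
      strength ω (intFacets bricksOf B) (cutB bricksOf X) := by
  rw [strength_eq, strength_eq]
  have hsub : intFacets bricksOf B ∩ cutB bricksOf X ⊆ intFacets bricksOf B ∩ cutB bricksOf Y := by
    intro f hf
    obtain ⟨hfB, hfX⟩ := Finset.mem_inter.mp hf
    obtain ⟨hBb, -⟩ := mem_intFacets.mp hfB
    obtain ⟨⟨T, hT, hTX⟩, -⟩ := mem_cutB.mp hfX
    exact Finset.mem_inter.mpr ⟨hfB, mem_cutB.mpr ⟨⟨T, hT, hXY hTX⟩, ⟨B, hBb, hB⟩⟩⟩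
  have := wt_mono (ω := ω) hω hsub
  linarith

-- Properness
variable {Face : Type} [DecidableEq Face] {facesOf : Facet → Finset Face} {bdE : Finset Face}

lemma proper_empty :
    ProperSurf (univ.filter fun f => (bricksOf f).card = 1) facesOf bdE (∅ : Finset Facet) := by
  constructor
  · intro f hf; simp at hf
  · intro e he; simp

lemma proper_symmDiff {S T : Finset Facet}
    (hS : ProperSurf (univ.filter fun f => (bricksOf f).card = 1) facesOf bdE S)
    (hT : ProperSurf (univ.filter fun f => (bricksOf f).card = 1) facesOf bdE T) :
    ProperSurf (univ.filter fun f => (bricksOf f).card = 1) facesOf bdE (S ∆ T) := by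
  constructor
  · intro f hf
    rcases Finset.mem_symmDiff.mp hf with ⟨h, -⟩ | ⟨h, -⟩
    · exact hS.1 f h
    · exact hT.1 f h
  · intro e he
    have hfil : (S ∆ T).filter (fun f => e ∈ facesOf f)
        = (S.filter (fun f => e ∈ facesOf f)) ∆ (T.filter (fun f => e ∈ facesOf f)) := by
      ext f
      simp only [Finset.mem_filter, Finset.mem_symmDiff]
      tauto
    have hu := hS.2 e he
    have hv := hT.2 e he
    rw [Nat.even_iff] at hu hv
    set s := S.filter (fun f => e ∈ facesOf f)
    set t := T.filter (fun f => e ∈ facesOf f)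
    have hcard : (s ∆ t).card + (s ∩ t).card + (s ∩ t).card = s.card + t.card := by
      have h1 : s ∆ t = (s \ t) ∪ (t \ s) := rfl
      have hd : Disjoint (s \ t) (t \ s) := disjoint_sdiff_sdiff
      have h2 : (s ∆ t).card = (s \ t).card + (t \ s).card := by
        rw [h1]; exact Finset.card_union_of_disjoint hd
      have h3 : (s \ t).card + (s ∩ t).card = s.card := by
        rw [Finset.card_sdiff_add_card_inter]
      have h4 : (t \ s).card + (t ∩ s).card = t.card := by
        rw [Finset.card_sdiff_add_card_inter]
      rw [Finset.inter_comm t s] at h4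
      omega
    rw [hfil, Nat.even_iff]
    omega

include hBC in
lemma proper_cutB (hbrickproper : ∀ A : Brick,
      ProperSurf (univ.filter (fun f => (bricksOf f).card = 1)) facesOf bdE
        (intFacets bricksOf A)) (X : Finset Brick) :
    ProperSurf (univ.filter fun f => (bricksOf f).card = 1) facesOf bdE (cutB bricksOf X) := by
  induction X using Finset.induction with
  | empty => rw [cutB_empty]; exact proper_empty
  | insert _ _ hB ih =>
      rw [cutB_insert hBC hB]
      exact proper_symmDiff ih (hbrickproper _)

end C

section D
variable {Brick Facet : Type} [Fintype Brick] [DecidableEq Brick] [Fintype Facet]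
  [DecidableEq Facet] {bricksOf : Facet → Finset Brick} {ω : Facet → ℝ}

/-- A brick chain of length N: starts empty, ends with everything, adds one brick a step. -/
def IsCh (N : ℕ) (c : ℕ → Finset Brick) : Prop :=
  c 0 = ∅ ∧ c N = univ ∧ ∀ j < N, ∃ X ∉ c j, c (j+1) = insert X (c j)

lemma chain_subset_succ {N : ℕ} {c : ℕ → Finset Brick} (hc : IsCh N c) {j : ℕ} (hj : j < N) :
    c j ⊆ c (j+1) := by
  obtain ⟨X, -, hX2⟩ := hc.2.2 j hj
  rw [hX2]; exact Finset.subset_insert _ _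

lemma chain_mono {N : ℕ} {c : ℕ → Finset Brick} (hc : IsCh N c) {i j : ℕ}
    (hij : i ≤ j) (hjN : j ≤ N) : c i ⊆ c j := by
  induction j with
  | zero => exact (Nat.le_zero.mp hij) ▸ Finset.Subset.refl _
  | succ k ih =>
    rcases Nat.lt_or_ge i (k+1) with h | h
    · exact (ih (Nat.lt_succ_iff.mp h) (by omega)).trans (chain_subset_succ hc (by omega))
    · have : i = k + 1 := le_antisymm hij h
      rw [this]

lemma chain_insert_of_mem {N : ℕ} {c : ℕ → Finset Brick} (hc : IsCh N c) {j : ℕ} {X : Brick}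
    (hj : j < N) (h1 : X ∈ c (j+1)) (h2 : X ∉ c j) : c (j+1) = insert X (c j) := by
  obtain ⟨Y, hY1, hY2⟩ := hc.2.2 j hj
  rw [hY2] at h1 ⊢
  rcases Finset.mem_insert.mp h1 with rfl | h
  · rfl
  · exact absurd h h2

lemma chain_exists : ∃ c : ℕ → Finset Brick, IsCh (Fintype.card Brick) c := by
  set N := Fintype.card Brick
  let e : Fin N ≃ Brick := (Fintype.equivFin Brick).symm
  refine ⟨fun j => univ.filter (fun T => ((e.symm T : Fin N) : ℕ) < j), ?_, ?_, ?_⟩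
  · ext T; simp
  · ext T; simp [(e.symm T).isLt]
  · intro j hj
    refine ⟨e ⟨j, hj⟩, by simp, ?_⟩
    ext T
    simp only [Finset.mem_filter, Finset.mem_univ, true_and, Finset.mem_insert]
    constructor
    · intro h
      rcases Nat.lt_succ_iff_lt_or_eq.mp h with h' | h'
      · exact Or.inr (by simp [h'])
      · left
        have : e.symm T = ⟨j, hj⟩ := Fin.ext h'
        rw [← this]; simp
    · rintro (rfl | h)
      · simp [Nat.lt_succ_iff]
      · exact Nat.lt_succ_of_lt h

end D

section E
variable {Brick Facet : Type} [Fintype Brick] [DecidableEq Brick] [Fintype Facet]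
  [DecidableEq Facet] {bricksOf : Facet → Finset Brick} {ω : Facet → ℝ}

set_option maxHeartbeats 1000000 in
lemma key_ineq (hω : ∀ f, 0 ≤ ω f)
    (hBC : ∀ f : Facet, (bricksOf f).card = 1 ∨ (bricksOf f).card = 2)
    {N : ℕ} {c : ℕ → Finset Brick} (hc : IsCh N c) {m : ℝ}
    (hmax : ∀ j ≤ N, wt ω (cutB bricksOf (c j)) ≤ m)
    (hmincnt : ∀ c' : ℕ → Finset Brick, IsCh N c' →
      (∀ j ≤ N, wt ω (cutB bricksOf (c' j)) ≤ m) →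
      ((Finset.range (N+1)).filter (fun j => wt ω (cutB bricksOf (c j)) = m)).card ≤
      ((Finset.range (N+1)).filter (fun j => wt ω (cutB bricksOf (c' j)) = m)).card)
    {t : ℕ} (htN : t ≤ N) (hlt : wt ω (cutB bricksOf (c t)) = m)
    {A B : Brick} (hA : A ∈ c t) (hB : B ∉ c t)
    (hsA : strength ω (intFacets bricksOf A) (cutB bricksOf (c t)) ≤ 0)
    (hsB : strength ω (intFacets bricksOf B) (cutB bricksOf (c t)) ≤ 0)
    (hA' : strength ω (intFacets bricksOf A) (cutB bricksOf (c t)) < 0 ∨ A ∉ c (t-1))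
    (hB' : strength ω (intFacets bricksOf B) (cutB bricksOf (c t)) < 0 ∨ B ∈ c (t+1)) :
    -(strength ω (intFacets bricksOf A) (cutB bricksOf (c t)))
      - strength ω (intFacets bricksOf B) (cutB bricksOf (c t))
      ≤ 2 * wt ω (commonFacets bricksOf A B) := by
  classical
  by_contra hcon
  push_neg at hcon
  -- notation
  set S := cutB bricksOf (c t) with hS_def
  set IA := intFacets bricksOf A with hIA_def
  set IB := intFacets bricksOf B with hIB_def
  set sA := strength ω IA S with hsA_def
  set sB := strength ω IB S with hsB_def
  have hAB : A ≠ B := fun h => hB (h ▸ hA)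
  have ht1 : 1 ≤ t := by
    by_contra h
    have : t = 0 := by omega
    rw [this, hc.1] at hA
    exact absurd hA (Finset.notMem_empty A)
  have htN' : t < N := by
    rcases Nat.lt_or_ge t N with h | h
    · exact h
    · have : t = N := le_antisymm htN h
      rw [this, hc.2.1] at hB
      exact absurd (Finset.mem_univ B) hB
  -- heights of A and B
  have hexA : ∃ j, A ∈ c j := ⟨t, hA⟩
  have hexB : ∃ j, B ∈ c j := ⟨N, hc.2.1 ▸ Finset.mem_univ B⟩
  set a := Nat.find hexA with ha_def
  set b := Nat.find hexB with hb_def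
  have haA : A ∈ c a := Nat.find_spec hexA
  have hbB : B ∈ c b := Nat.find_spec hexB
  have ha_min : ∀ j, j < a → A ∉ c j := fun j hj => Nat.find_min hexA hj
  have hb_min : ∀ j, j < b → B ∉ c j := fun j hj => Nat.find_min hexB hj
  have ha_le : a ≤ t := Nat.find_le hA
  have hb_le : b ≤ N := Nat.find_le (hc.2.1 ▸ Finset.mem_univ B)
  have ha1 : 1 ≤ a := by
    by_contra h
    have : a = 0 := by omega
    rw [this, hc.1] at haA
    exact absurd haA (Finset.notMem_empty A)
  have hbt : t < b := by
    by_contra h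
    exact hB (chain_mono hc (Nat.le_of_not_lt h) htN hbB)
  have memA : ∀ j, a ≤ j → j ≤ N → A ∈ c j := fun j h1 h2 => chain_mono hc h1 h2 haA
  -- structure of the chain at a and b
  have e_ca : c a = insert A (c (a-1)) := by
    have h1 : a - 1 < N := by omega
    have h2 : a - 1 + 1 = a := by omega
    have := chain_insert_of_mem hc h1 (h2 ▸ haA) (ha_min (a-1) (by omega))
    rwa [h2] at this
  have e_ca' : (c a).erase A = c (a-1) := by
    rw [e_ca, Finset.erase_insert (ha_min (a-1) (by omega))]
  have e_cb : c b = insert B (c (b-1)) := by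
    have h1 : b - 1 < N := by omega
    have h2 : b - 1 + 1 = b := by omega
    have := chain_insert_of_mem hc h1 (h2 ▸ hbB) (hb_min (b-1) (by omega))
    rwa [h2] at this
  -- case dichotomies from hA', hB'
  have hat_or : a = t ∨ (a < t ∧ sA < 0) := by
    rcases hA' with h | h
    · rcases Nat.eq_or_lt_of_le ha_le with h2 | h2
      · exact Or.inl h2
      · exact Or.inr ⟨h2, h⟩
    · left
      have : ¬ (a ≤ t - 1) := fun h2 => h (chain_mono hc h2 (by omega) haA)
      omega
  have hbt_or : b = t + 1 ∨ (t + 1 < b ∧ sB < 0) := by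
    rcases hB' with h | h
    · rcases Nat.eq_or_lt_of_le (by omega : t + 1 ≤ b) with h2 | h2
      · exact Or.inl h2.symm
      · exact Or.inr ⟨h2, h⟩
    · left
      have : b ≤ t + 1 := Nat.find_le h
      omega
  -- the modified chain
  set cs : ℕ → Finset Brick := fun j =>
    if j < a then c j
    else if j < t then (c (j+1)).erase A
    else if j = t then insert B ((c t).erase A)
    else if j ≤ b then insert B (c (j-1))
    else c j with hcs_def
  have ev1 : ∀ j, j < a → cs j = c j := fun j h => by simp [hcs_def, h]
  have ev2 : ∀ j, a ≤ j → j < t → cs j = (c (j+1)).erase A := fun j h1 h2 => by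
    simp [hcs_def, Nat.not_lt.mpr h1, h2]
  have ev3 : cs t = insert B ((c t).erase A) := by
    simp [hcs_def, Nat.not_lt.mpr ha_le, Nat.lt_irrefl]
  have ev4 : ∀ j, t < j → j ≤ b → cs j = insert B (c (j-1)) := fun j h1 h2 => by
    have h3 : ¬ j < a := by omega
    have h4 : ¬ j < t := by omega
    have h5 : j ≠ t := by omega
    simp [hcs_def, h3, h4, h5, h2]
  have ev5 : ∀ j, b < j → cs j = c j := fun j h => by
    have h3 : ¬ j < a := by omega
    have h4 : ¬ j < t := by omega
    have h5 : j ≠ t := by omega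
    have h6 : ¬ j ≤ b := by omega
    simp [hcs_def, h3, h4, h5, h6]
  -- unified evaluation just below t
  have ev2' : ∀ j, j + 1 = t → cs j = (c t).erase A := by
    intro j hj
    rcases Nat.lt_or_ge j a with h | h
    · have hat : a = t := by
        rcases hat_or with h2 | h2
        · exact h2
        · omega
      rw [ev1 j h]
      have hj2 : j = a - 1 := by omega
      have ht2 : t = a := hat.symm
      rw [hj2, ht2, e_ca']
    · rw [ev2 j h (by omega), hj]
  have ev4' : cs b = c b := by
    rw [ev4 b hbt (le_refl b), ← e_cb]
  -- cs is a chain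
  have hcs : IsCh N cs := by
    refine ⟨by rw [ev1 0 (by omega), hc.1], ?_, ?_⟩
    · rcases Nat.eq_or_lt_of_le hb_le with h | h
      · rw [← h, ev4', h, hc.2.1]
      · rw [ev5 N h, hc.2.1]
    · intro j hj
      rcases Nat.lt_or_ge (j+1) a with h | h
      · -- far below
        obtain ⟨X, hX1, hX2⟩ := hc.2.2 j hj
        exact ⟨X, by rwa [ev1 j (by omega)], by rw [ev1 j (by omega), ev1 (j+1) h, hX2]⟩
      · rcases Nat.lt_or_ge (j+1) t with h2 | h2
        · -- a ≤ j+1 < t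
          have hcsj : cs j = (c (j+1)).erase A := by
            rcases Nat.lt_or_ge j a with hja | hja
            · have hja' : j + 1 = a := by omega
              rw [ev1 j hja, hja']
              rw [e_ca']
              congr 1
              omega
            · exact ev2 j hja (by omega)
          obtain ⟨Y, hY1, hY2⟩ := hc.2.2 (j+1) (by omega)
          have hAj1 : A ∈ c (j+1) := memA (j+1) h (by omega)
          have hYA : Y ≠ A := fun hYA => hY1 (hYA ▸ hAj1)
          refine ⟨Y, ?_, ?_⟩
          · rw [hcsj]
            exact fun hY => hY1 (Finset.mem_of_mem_erase hY)
          · rw [hcsj, ev2 (j+1) h h2, hY2, Finset.erase_insert_of_ne hYA]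
        · rcases Nat.lt_or_ge j t with h3 | h3
          · -- j+1 = t
            have hjt : j + 1 = t := by omega
            refine ⟨B, ?_, ?_⟩
            · rw [ev2' j hjt]
              exact fun hBm => hB (Finset.mem_of_mem_erase hBm)
            · rw [ev2' j hjt, hjt, ev3]
          · rcases Nat.lt_or_ge j b with h4 | h4
            · rcases Nat.eq_or_lt_of_le h3 with h5 | h5
              · -- j = t
                have hjt : j = t := h5.symm
                subst hjt
                refine ⟨A, ?_, ?_⟩
                · rw [ev3]
                  intro hAm
                  rcases Finset.mem_insert.mp hAm with h6 | h6
                  · exact hAB h6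
                  · exact absurd h6 (Finset.notMem_erase A (c j))
                · rw [ev3, ev4 (j+1) (by omega) (by omega)]
                  have h7 : j + 1 - 1 = j := by omega
                  rw [h7, Finset.insert_comm, Finset.insert_erase hA]
              · -- t < j < b
                obtain ⟨Y, hY1, hY2⟩ := hc.2.2 (j-1) (by omega)
                have hj1 : j - 1 + 1 = j := by omega
                rw [hj1] at hY2
                have hYj : Y ∈ c j := by
                  rw [hY2]; exact Finset.mem_insert_self _ _
                have hYB : Y ≠ B := fun he => hb_min j h4 (he ▸ hYj)
                refine ⟨Y, ?_, ?_⟩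
                · rw [ev4 j h5 (by omega)]
                  intro hYm
                  rcases Finset.mem_insert.mp hYm with h6 | h6
                  · exact hYB h6
                  · exact hY1 h6
                · rw [ev4 j h5 (by omega), ev4 (j+1) (by omega) (by omega)]
                  have h7 : j + 1 - 1 = j := by omega
                  rw [h7, hY2, Finset.insert_comm]
            · -- j ≥ b
              obtain ⟨X, hX1, hX2⟩ := hc.2.2 j hj
              have hcsj : cs j = c j := by
                rcases Nat.eq_or_lt_of_le h4 with h5 | h5
                · rw [← h5, ev4']
                · exact ev5 j h5
              exact ⟨X, by rwa [hcsj], by rw [hcsj, ev5 (j+1) (by omega), hX2]⟩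
  -- values of the modified chain
  have vals : ∀ j, j ≤ N → wt ω (cutB bricksOf (cs j)) ≤ m ∧
      (wt ω (cutB bricksOf (cs j)) = m → wt ω (cutB bricksOf (c j)) = m ∧ j ≠ t) := by
    intro j hj
    rcases Nat.lt_or_ge j a with h | h
    · rw [ev1 j h]
      exact ⟨hmax j hj, fun hm => ⟨hm, by omega⟩⟩
    · rcases Nat.lt_or_ge j t with h2 | h2
      · -- a ≤ j < t : strictly below m
        obtain ⟨hat, hsAlt⟩ : a < t ∧ sA < 0 := by
          rcases hat_or with h3 | h3
          · omega
          · exact h3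
        rw [ev2 j h h2]
        have hAj : A ∈ c (j+1) := memA (j+1) (by omega) (by omega)
        rw [cutB_erase hBC hAj, wt_symmDiff]
        have hm1 : wt ω (cutB bricksOf (c (j+1))) ≤ m := hmax (j+1) (by omega)
        have hm2 : strength ω IA (cutB bricksOf (c (j+1))) ≤ sA := by
          rw [hsA_def, hS_def]
          exact strength_mono_mem hω hAj (chain_mono hc (by omega : j+1 ≤ t) htN)
        constructor
        · linarith
        · intro hm
          exfalso
          linarith
      · rcases Nat.eq_or_lt_of_le h2 with h3 | h3
        · -- j = t
          rw [← h3] at hj ⊢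
          rw [ev3]
          have hBnm : B ∉ (c t).erase A := fun hBm => hB (Finset.mem_of_mem_erase hBm)
          rw [cutB_insert hBC hBnm, wt_symmDiff, cutB_erase hBC hA, wt_symmDiff]
          have hcommon : commonFacets bricksOf A B = IA ∩ IB := common_eq_inter hBC hAB
          have hsubS : IA ∩ IB ⊆ S := hcommon ▸ common_subset_cut hA hB
          rw [← hS_def, ← hIA_def, ← hIB_def, strength_symmDiff_int hω hsubS]
          have hwab : wt ω (commonFacets bricksOf A B) = wt ω (IA ∩ IB) := by rw [hcommon]
          constructor
          · rw [← hsA_def, ← hsB_def]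
            linarith [hlt]
          · intro hm
            exfalso
            rw [← hsA_def, ← hsB_def] at hm
            have : wt ω S = m := hlt
            linarith
        · -- j > t
          rcases Nat.lt_or_ge b j with h4 | h4
          · rw [ev5 j h4]
            exact ⟨hmax j hj, fun hm => ⟨hm, by omega⟩⟩
          · -- t < j ≤ b
            rw [ev4 j h3 h4]
            have hBj : B ∉ c (j-1) := hb_min (j-1) (by omega)
            rw [cutB_insert hBC hBj, wt_symmDiff]
            have hm1 : wt ω (cutB bricksOf (c (j-1))) ≤ m := hmax (j-1) (by omega)
            rcases Nat.eq_or_lt_of_le (by omega : t + 1 ≤ j) with h5 | h5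
            · -- j = t+1
              have hjt : j - 1 = t := by omega
              rw [hjt]
              constructor
              · rw [← hS_def, ← hIB_def, ← hsB_def]
                linarith [hlt]
              · intro hm
                rw [← hS_def, ← hIB_def, ← hsB_def] at hm
                have hsB0 : sB = 0 := by linarith [hlt]
                have hb' : b = t + 1 := by
                  rcases hbt_or with h6 | h6
                  · exact h6
                  · exfalso; linarith [h6.2]
                have hcj : c j = insert B (c t) := by
                  have hjb : j = b := by omega
                  have hb1 : b - 1 = t := by omega
                  rw [hjb, e_cb, hb1]
                refine ⟨?_, by omega⟩
                rw [hcj, cutB_insert hBC hB, wt_symmDiff, ← hS_def, ← hIB_def, ← hsB_def]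
                rw [hlt, hsB0]
                ring
            · -- j ≥ t+2
              have hsBlt : sB < 0 := by
                rcases hbt_or with h6 | h6
                · omega
                · exact h6.2
              have hm2 : strength ω IB (cutB bricksOf (c (j-1))) ≤ sB := by
                rw [hsB_def, hS_def]
                exact strength_anti_not_mem hω hBj (chain_mono hc (by omega : t ≤ j-1) (by omega))
              constructor
              · linarith
              · intro hm
                exfalso
                linarith
  -- counting: the modified chain has strictly fewer m-levels
  have hsubF : (Finset.range (N+1)).filter (fun j => wt ω (cutB bricksOf (cs j)) = m) ⊆
      ((Finset.range (N+1)).filter (fun j => wt ω (cutB bricksOf (c j)) = m)).erase t := by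
    intro j hjm
    obtain ⟨hjr, hjv⟩ := Finset.mem_filter.mp hjm
    have hjN : j ≤ N := by
      have := Finset.mem_range.mp hjr
      omega
    obtain ⟨hv, hne⟩ := (vals j hjN).2 hjv
    exact Finset.mem_erase.mpr ⟨hne, Finset.mem_filter.mpr ⟨hjr, hv⟩⟩
  have htmem : t ∈ (Finset.range (N+1)).filter (fun j => wt ω (cutB bricksOf (c j)) = m) :=
    Finset.mem_filter.mpr ⟨Finset.mem_range.mpr (by omega), hlt⟩
  have hcard1 := Finset.card_le_card hsubF
  rw [Finset.card_erase_of_mem htmem] at hcard1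
  have hcard2 := hmincnt cs hcs (fun j hj => (vals j hj).1)
  have hpos : 1 ≤ ((Finset.range (N+1)).filter
      (fun j => wt ω (cutB bricksOf (c j)) = m)).card :=
    Finset.card_pos.mpr ⟨t, htmem⟩
  omega

end E


set_option maxHeartbeats 2000000 in
/-- a weighted brick complex with an interior facet of positive weight
contains a (nonempty) proper surface which is a stable or an unstable minimal surface. -/
theorem stmt13 {Brick Facet Face : Type} [Fintype Brick] [DecidableEq Brick]
    [Fintype Facet] [DecidableEq Facet] [DecidableEq Face]
    (ω : Facet → ℝ) (hω : ∀ f, 0 ≤ ω f)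
    (bricksOf : Facet → Finset Brick)
    (hBC : ∀ f, (bricksOf f).card = 1 ∨ (bricksOf f).card = 2)
    (facesOf : Facet → Finset Face) (bdE : Finset Face)
    (hbrickproper : ∀ A : Brick,
      ProperSurf (univ.filter (fun f => (bricksOf f).card = 1)) facesOf bdE
        (intFacets bricksOf A))
    (hpos : ∃ f : Facet, (bricksOf f).card = 2 ∧ 0 < ω f) :
    ∃ S : Finset Facet, S.Nonempty ∧
      ProperSurf (univ.filter (fun f => (bricksOf f).card = 1)) facesOf bdE S ∧
      (StableMin ω bricksOf S ∨ UnstableMin ω bricksOf S) := by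
  classical
  obtain ⟨f0, hf0c, hf0p⟩ := hpos
  set N := Fintype.card Brick with hN
  obtain ⟨c₀, hc₀⟩ := chain_exists (Brick := Brick)
  have hrne : (Finset.range (N+1)).Nonempty := ⟨0, Finset.mem_range.mpr (by omega)⟩
  have himne : ∀ c : ℕ → Finset Brick,
      ((Finset.range (N+1)).image (fun j => wt ω (cutB bricksOf (c j)))).Nonempty :=
    fun c => hrne.image _
  set maxl : (ℕ → Finset Brick) → ℝ :=
    fun c => ((Finset.range (N+1)).image (fun j => wt ω (cutB bricksOf (c j)))).max' (himne c)
    with hmaxl_def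
  have hmaxl_le : ∀ (c : ℕ → Finset Brick) (j : ℕ), j ≤ N →
      wt ω (cutB bricksOf (c j)) ≤ maxl c := by
    intro c j hj
    apply Finset.le_max'
    exact Finset.mem_image.mpr ⟨j, Finset.mem_range.mpr (Nat.lt_succ_of_le hj), rfl⟩
  have hmaxl_mem : ∀ c : ℕ → Finset Brick, ∃ j ≤ N, wt ω (cutB bricksOf (c j)) = maxl c := by
    intro c
    obtain ⟨j, hj1, hj2⟩ := Finset.mem_image.mp (Finset.max'_mem _ (himne c))
    refine ⟨j, ?_, hj2⟩
    have := Finset.mem_range.mp hj1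
    omega
  set W0 : Finset ℝ := Finset.univ.powerset.image (wt ω) with hW0_def
  have hmaxl_W0 : ∀ c : ℕ → Finset Brick, maxl c ∈ W0 := by
    intro c
    obtain ⟨j, -, hj2⟩ := hmaxl_mem c
    rw [← hj2]
    exact Finset.mem_image.mpr ⟨cutB bricksOf (c j),
      Finset.mem_powerset.mpr (Finset.subset_univ _), rfl⟩
  set T0 : Finset ℝ := W0.filter (fun r => ∃ c, IsCh (Brick := Brick) N c ∧ maxl c = r)
    with hT0_def
  have hT0ne : T0.Nonempty := ⟨maxl c₀, Finset.mem_filter.mpr ⟨hmaxl_W0 c₀, ⟨c₀, hc₀, rfl⟩⟩⟩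
  set m : ℝ := T0.min' hT0ne with hm_def
  have hm_min : ∀ c : ℕ → Finset Brick, IsCh N c → m ≤ maxl c := by
    intro c hc
    exact Finset.min'_le _ _ (Finset.mem_filter.mpr ⟨hmaxl_W0 c, ⟨c, hc, rfl⟩⟩)
  obtain ⟨-, c1, hc1, hc1m⟩ := Finset.mem_filter.mp (Finset.min'_mem T0 hT0ne)
  have hQ : ∃ n, ∃ c, IsCh (Brick := Brick) N c ∧ maxl c = m ∧
      ((Finset.range (N+1)).filter (fun j => wt ω (cutB bricksOf (c j)) = m)).card = n :=
    ⟨_, c1, hc1, hc1m, rfl⟩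
  obtain ⟨c, hch, hchm, hchcnt⟩ := Nat.find_spec hQ
  have hmax : ∀ j ≤ N, wt ω (cutB bricksOf (c j)) ≤ m := by
    intro j hj
    rw [← hchm]
    exact hmaxl_le c j hj
  have hmincnt : ∀ c' : ℕ → Finset Brick, IsCh N c' →
      (∀ j ≤ N, wt ω (cutB bricksOf (c' j)) ≤ m) →
      ((Finset.range (N+1)).filter (fun j => wt ω (cutB bricksOf (c j)) = m)).card ≤
      ((Finset.range (N+1)).filter (fun j => wt ω (cutB bricksOf (c' j)) = m)).card := by
    intro c' hc' hble
    have h1 : maxl c' ≤ m := by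
      apply Finset.max'_le
      intro y hy
      obtain ⟨j, hj1, hj2⟩ := Finset.mem_image.mp hy
      rw [← hj2]
      exact hble j (by have := Finset.mem_range.mp hj1; omega)
    have h2 : maxl c' = m := le_antisymm h1 (hm_min c' hc')
    rw [hchcnt]
    exact Nat.find_min' hQ ⟨c', hc', h2, rfl⟩
  -- m is positive
  have hm_pos : 0 < m := by
    obtain ⟨U, V, hUV, hf0UV⟩ := Finset.card_eq_two.mp hf0c
    have hexN : ∃ T ∈ bricksOf f0, T ∈ c N :=
      ⟨U, by rw [hf0UV]; exact Finset.mem_insert_self _ _, hch.2.1 ▸ Finset.mem_univ U⟩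
    have hex : ∃ j, ∃ T ∈ bricksOf f0, T ∈ c j := ⟨N, hexN⟩
    obtain ⟨j₀, ⟨T, hTf, hTj⟩, hj₀_min', hj₀_le⟩ :
        ∃ j₀, (∃ T ∈ bricksOf f0, T ∈ c j₀) ∧
          (∀ k, k < j₀ → ¬ ∃ T ∈ bricksOf f0, T ∈ c k) ∧ j₀ ≤ N :=
      ⟨Nat.find hex, Nat.find_spec hex, fun k hk => Nat.find_min hex hk, Nat.find_le hexN⟩
    have hj₀_min : ∀ k, k < j₀ → ∀ T' ∈ bricksOf f0, T' ∉ c k := by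
      intro k hk T' h1 h2
      exact hj₀_min' k hk ⟨T', h1, h2⟩
    have hj₀_pos : 1 ≤ j₀ := by
      by_contra h
      have h0 : j₀ = 0 := by omega
      rw [h0, hch.1] at hTj
      exact absurd hTj (Finset.notMem_empty T)
    -- the other brick of f0 is not yet in c j₀
    obtain ⟨X, hX1, hX2⟩ := hch.2.2 (j₀ - 1) (by omega)
    have hstep : c j₀ = insert X (c (j₀ - 1)) := by
      have h1 : j₀ - 1 + 1 = j₀ := by omega
      rw [h1] at hX2
      exact hX2
    have hTX : T = X := by
      rw [hstep] at hTj
      rcases Finset.mem_insert.mp hTj with h | h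
      · exact h
      · exact absurd h (hj₀_min (j₀-1) (by omega) T hTf)
    -- pick the other endpoint
    have hother : ∃ T', T' ∈ bricksOf f0 ∧ T' ≠ T := by
      rcases Finset.mem_insert.mp (hf0UV ▸ hTf) with h | h
      · exact ⟨V, by rw [hf0UV]; simp, by rw [← h] at hUV; exact fun hc => hUV hc.symm⟩
      · have h' : T = V := Finset.mem_singleton.mp h
        exact ⟨U, by rw [hf0UV]; simp, by rw [h']; exact fun hc => hUV hc⟩
    obtain ⟨T', hT'f, hT'T⟩ := hother
    have hT'j : T' ∉ c j₀ := by
      rw [hstep]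
      intro h
      rcases Finset.mem_insert.mp h with h | h
      · exact hT'T (h.trans hTX.symm)
      · exact hj₀_min (j₀-1) (by omega) T' hT'f h
    have hf0S : f0 ∈ cutB bricksOf (c j₀) :=
      mem_cutB.mpr ⟨⟨T, hTf, hTj⟩, ⟨T', hT'f, hT'j⟩⟩
    calc (0:ℝ) < ω f0 := hf0p
      _ ≤ wt ω (cutB bricksOf (c j₀)) := le_wt hω hf0S
      _ ≤ m := hmax j₀ hj₀_le
  -- choose the level t achieving the max
  have hTex : ∃ t, t ≤ N ∧ wt ω (cutB bricksOf (c t)) = m := by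
    obtain ⟨t, h1, h2⟩ := hmaxl_mem c
    exact ⟨t, h1, h2.trans hchm⟩
  obtain ⟨t, htN, htm⟩ := hTex
  set S : Finset Facet := cutB bricksOf (c t) with hS_def
  have hSm : wt ω S = m := htm
  have hSne : S.Nonempty := nonempty_of_wt_pos (ω := ω) (by rw [hSm]; exact hm_pos)
  have hSproper : ProperSurf (univ.filter (fun f => (bricksOf f).card = 1)) facesOf bdE S :=
    proper_cutB hBC hbrickproper (c t)
  obtain ⟨fS, hfS⟩ := id hSne
  obtain ⟨⟨T1, hT1f, hT1⟩, ⟨T2, hT2f, hT2⟩⟩ := mem_cutB.mp hfS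
  have ht1 : 1 ≤ t := by
    by_contra h
    have h0 : t = 0 := by omega
    rw [h0, hch.1] at hT1
    exact absurd hT1 (Finset.notMem_empty T1)
  have htN' : t < N := by
    rcases Nat.lt_or_ge t N with h | h
    · exact h
    · have h0 : t = N := by omega
      rw [h0, hch.2.1] at hT2
      exact absurd (Finset.mem_univ T2) hT2
  refine ⟨S, hSne, hSproper, ?_⟩
  by_cases hstab : StableMin ω bricksOf S
  · exact Or.inl hstab
  · right
    simp only [StableMin, not_forall, not_not] at hstab
    obtain ⟨X, hXstrict⟩ := hstab
    -- the key pairing facts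
    have hkey : ∀ A B : Brick, A ∈ c t → B ∉ c t →
        strength ω (intFacets bricksOf A) S ≤ 0 →
        strength ω (intFacets bricksOf B) S ≤ 0 →
        (strength ω (intFacets bricksOf A) S < 0 ∨ A ∉ c (t-1)) →
        (strength ω (intFacets bricksOf B) S < 0 ∨ B ∈ c (t+1)) →
        2 * wt ω (commonFacets bricksOf A B) ≥
          |strength ω (intFacets bricksOf A) S| + |strength ω (intFacets bricksOf B) S| := by
      intro A B hA hB hsA hsB hA' hB'
      have h := key_ineq hω hBC hch hmax hmincnt htN htm hA hB hsA hsB hA' hB'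
      rw [abs_of_nonpos hsA, abs_of_nonpos hsB]
      linarith
    -- the brick just above level t
    obtain ⟨Bt, hBt1, hBt2⟩ := hch.2.2 t htN'
    have hBtc : Bt ∈ c (t+1) := by rw [hBt2]; exact Finset.mem_insert_self _ _
    have hsBt : strength ω (intFacets bricksOf Bt) S ≤ 0 := by
      have h1 : wt ω (cutB bricksOf (c (t+1))) ≤ m := hmax (t+1) (by omega)
      rw [hBt2, cutB_insert hBC hBt1, wt_symmDiff, ← hS_def, hSm] at h1
      linarith
    -- the brick just below level t
    have hAtEx : ∃ Y, Y ∉ c (t-1) ∧ c t = insert Y (c (t-1)) := by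
      obtain ⟨Y, hY1, hY2⟩ := hch.2.2 (t-1) (by omega)
      have h1 : t - 1 + 1 = t := by omega
      rw [h1] at hY2
      exact ⟨Y, hY1, hY2⟩
    obtain ⟨At, hAt1, hAt2⟩ := hAtEx
    have hAtc : At ∈ c t := by rw [hAt2]; exact Finset.mem_insert_self _ _
    have hAtnc : At ∉ c (t-1) := hAt1
    have herase : (c t).erase At = c (t-1) := by
      rw [hAt2, Finset.erase_insert hAt1]
    have hsAt : strength ω (intFacets bricksOf At) S ≤ 0 := by
      have h1 : wt ω (cutB bricksOf (c (t-1))) ≤ m := hmax (t-1) (by omega)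
      rw [← herase, cutB_erase hBC hAtc, wt_symmDiff, ← hS_def, hSm] at h1
      linarith
    -- partner below for any strict move above
    have hpartnerA : ∀ B : Brick, B ∉ c t →
        StrictShort ω (intFacets bricksOf B) S →
        ShortMove ω (intFacets bricksOf At) S ∧
        2 * wt ω (commonFacets bricksOf At B) ≥
          |strength ω (intFacets bricksOf At) S| + |strength ω (intFacets bricksOf B) S| := by
      intro B hB hBs
      have hineq := hkey At B hAtc hB hsAt (le_of_lt hBs.2) (Or.inr hAtnc) (Or.inl hBs.2)
      have hwpos : 0 < wt ω (commonFacets bricksOf At B) := by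
        have h1 : 0 < |strength ω (intFacets bricksOf B) S| := abs_pos.mpr (ne_of_lt hBs.2)
        have h2 : 0 ≤ |strength ω (intFacets bricksOf At) S| := abs_nonneg _
        linarith
      obtain ⟨g, hg⟩ := nonempty_of_wt_pos (ω := ω) hwpos
      have hAB : At ≠ B := fun h => hB (h ▸ hAtc)
      have hgm : g ∈ intFacets bricksOf At ∩ S := by
        have h1 := common_eq_inter (bricksOf := bricksOf) hBC hAB ▸ hg
        have h2 := common_subset_cut (bricksOf := bricksOf) hAtc hB hg
        exact Finset.mem_inter.mpr ⟨(Finset.mem_inter.mp h1).1, h2⟩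
      exact ⟨⟨⟨g, hgm⟩, hsAt⟩, hineq⟩
    -- partner above for any strict move below
    have hpartnerB : ∀ A : Brick, A ∈ c t →
        StrictShort ω (intFacets bricksOf A) S →
        ShortMove ω (intFacets bricksOf Bt) S ∧
        2 * wt ω (commonFacets bricksOf A Bt) ≥
          |strength ω (intFacets bricksOf A) S| + |strength ω (intFacets bricksOf Bt) S| := by
      intro A hA hAs
      have hineq := hkey A Bt hA hBt1 (le_of_lt hAs.2) hsBt (Or.inl hAs.2) (Or.inr hBtc)
      have hwpos : 0 < wt ω (commonFacets bricksOf A Bt) := by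
        have h1 : 0 < |strength ω (intFacets bricksOf A) S| := abs_pos.mpr (ne_of_lt hAs.2)
        have h2 : 0 ≤ |strength ω (intFacets bricksOf Bt) S| := abs_nonneg _
        linarith
      obtain ⟨g, hg⟩ := nonempty_of_wt_pos (ω := ω) hwpos
      have hAB : A ≠ Bt := fun h => hBt1 (h ▸ hA)
      have hgm : g ∈ intFacets bricksOf Bt ∩ S := by
        have h1 := common_eq_inter (bricksOf := bricksOf) hBC hAB ▸ hg
        have h2 := common_subset_cut (bricksOf := bricksOf) hA hBt1 hg
        exact Finset.mem_inter.mpr ⟨(Finset.mem_inter.mp h1).2, h2⟩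
      exact ⟨⟨⟨g, hgm⟩, hsBt⟩, hineq⟩
    refine ⟨c t, Finset.univ \ c t, ⟨T1, hT1⟩,
      ⟨T2, Finset.mem_sdiff.mpr ⟨Finset.mem_univ T2, hT2⟩⟩, ?_, ?_, ?_, ?_, ?_, ?_, ?_, ?_, ?_⟩
    · ext Y; simp
    · ext Y; simp [em]
    · intro A hA B hB
      exact common_subset_cut hA (Finset.mem_sdiff.mp hB).2
    · -- short move below
      by_cases hX : X ∈ c t
      · exact ⟨X, hX, hXstrict.1, le_of_lt hXstrict.2⟩
      · exact ⟨At, hAtc, (hpartnerA X hX hXstrict).1⟩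
    · -- short move above
      by_cases hX : X ∈ c t
      · exact ⟨Bt, Finset.mem_sdiff.mpr ⟨Finset.mem_univ Bt, hBt1⟩, (hpartnerB X hX hXstrict).1⟩
      · exact ⟨X, Finset.mem_sdiff.mpr ⟨Finset.mem_univ X, hX⟩, hXstrict.1, le_of_lt hXstrict.2⟩
    · -- some strict move
      by_cases hX : X ∈ c t
      · exact Or.inl ⟨X, hX, hXstrict⟩
      · exact Or.inr ⟨X, Finset.mem_sdiff.mpr ⟨Finset.mem_univ X, hX⟩, hXstrict⟩
    · -- strict below is balanced above
      intro A hA hAs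
      obtain ⟨h1, h2⟩ := hpartnerB A hA hAs
      exact ⟨Bt, Finset.mem_sdiff.mpr ⟨Finset.mem_univ Bt, hBt1⟩, h1, h2⟩
    · -- strict above is balanced below
      intro B hB hBs
      obtain ⟨h1, h2⟩ := hpartnerA B (Finset.mem_sdiff.mp hB).2 hBs
      exact ⟨At, hAtc, h1, h2⟩
    · -- strict pairs
      intro A hA B hB hAs hBs
      exact hkey A B hA (Finset.mem_sdiff.mp hB).2 (le_of_lt hAs.2) (le_of_lt hBs.2)
        (Or.inl hAs.2) (Or.inl hBs.2)
end

section
/- Let M be an n-dimensional simplicial pseudomanifold (n ≥ 2) with all facet weights 1, let P be the boundary of an n-simplex inside M (so ω(P) = n+1), and let S be a level surface of an ordering containing a facet F lying on one side X of P with F not in P. If F shares no (n−2)-face with P, then S contains at least n+1 facets in X not in P; if F shares exactly one (n−2)-face with P, S contains at least n facets in X not in P. -/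
open Finset

/-- The facets ((n−1)-dimensional faces) of an n-simplex `s`, as its n-element subsets. -/
def simFacets {V : Type} [DecidableEq V] (n : ℕ) (s : Finset V) : Finset (Finset V) :=
  s.powersetCard n

/-- An n-dimensional (closed) pseudomanifold: a nonempty finite pure n-dimensional
simplicial complex, given by its set `K` of n-simplices (each an (n+1)-element vertex
set), in which every (n−1)-face lies in exactly two n-simplices and the dual graph is
connected. -/
def IsPseudomanifold {V : Type} [DecidableEq V] (n : ℕ) (K : Finset (Finset V)) : Prop :=
  K.Nonempty ∧
  (∀ s ∈ K, s.card = n + 1) ∧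
  (∀ f : Finset V, f.card = n → (∃ s ∈ K, f ⊆ s) → (K.filter (fun s => f ⊆ s)).card = 2) ∧
  (∀ s ∈ K, ∀ t ∈ K,
    Relation.ReflTransGen (fun a b => a ∈ K ∧ b ∈ K ∧ a ≠ b ∧ (a ∩ b).card = n) s t)

/-- The sublevel set of an ordering `O` of the n-simplices of `K` at height `j`:
the simplices at heights 1,…,j. -/
def psub {V : Type} [DecidableEq V] (K : Finset (Finset V)) {N : ℕ}
    (O : Fin N ≃ {s : Finset V // s ∈ K}) (j : ℕ) : Finset (Finset V) :=
  ((Finset.univ : Finset (Fin N)).filter (fun k : Fin N => k.val + 1 ≤ j)).image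
    (fun k => (O k).val)

/-- The level surface at height `j`: the (n−1)-faces shared between a simplex of the
sublevel set and one of its complement. -/
def plevel {V : Type} [DecidableEq V] [Fintype V] (n : ℕ) (K : Finset (Finset V)) {N : ℕ}
    (O : Fin N ≃ {s : Finset V // s ∈ K}) (j : ℕ) : Finset (Finset V) :=
  (Finset.univ : Finset (Finset V)).filter
    (fun f => f.card = n ∧ (∃ s ∈ psub K O j, f ⊆ s) ∧ ∃ s ∈ K, s ∉ psub K O j ∧ f ⊆ s)

/-- Λ(j) for unit facet weights: the number of facets in the level surface at height j. -/
def pLam {V : Type} [DecidableEq V] [Fintype V] (n : ℕ) (K : Finset (Finset V)) {N : ℕ}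
    (O : Fin N ≃ {s : Finset V // s ∈ K}) (j : ℕ) : ℕ :=
  (plevel n K O j).card

lemma psub_subset {V : Type} [DecidableEq V] (K : Finset (Finset V)) {N : ℕ}
    (O : Fin N ≃ {s : Finset V // s ∈ K}) (j : ℕ) : psub K O j ⊆ K := by
  intro s hs
  simp only [psub, mem_image] at hs
  obtain ⟨k, _, rfl⟩ := hs
  exact (O k).2

lemma two_faces {V : Type} [DecidableEq V] {n : ℕ} (hn : 1 ≤ n) {s e : Finset V}
    (hs : s.card = n + 1) (he : e.card = n - 1) (hes : e ⊆ s) :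
    ((s.powersetCard n).filter (fun f => e ⊆ f)).card = 2 := by
  have hkey : (s.powersetCard n).filter (fun f => e ⊆ f)
      = (s \ e).image (fun v => insert v e) := by
    ext f
    simp only [mem_filter, mem_powersetCard, mem_image, mem_sdiff]
    constructor
    · rintro ⟨⟨hfs, hfc⟩, hef⟩
      have hcard : (f \ e).card = 1 := by
        rw [card_sdiff_of_subset hef]; omega
      obtain ⟨v, hv⟩ := card_eq_one.mp hcard
      have hvf : v ∈ f \ e := hv ▸ mem_singleton_self v
      refine ⟨v, ⟨hfs (mem_sdiff.mp hvf).1, (mem_sdiff.mp hvf).2⟩, ?_⟩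
      apply Finset.Subset.antisymm
      · intro x hx
        rcases mem_insert.mp hx with rfl | hx
        · exact (mem_sdiff.mp hvf).1
        · exact hef hx
      · intro x hx
        by_cases hxe : x ∈ e
        · exact mem_insert_of_mem hxe
        · have hxm : x ∈ f \ e := mem_sdiff.mpr ⟨hx, hxe⟩
          rw [hv, mem_singleton] at hxm
          subst hxm
          exact mem_insert_self x e
    · rintro ⟨v, ⟨hvs, hve⟩, rfl⟩
      refine ⟨⟨insert_subset hvs hes, ?_⟩, subset_insert _ _⟩
      rw [card_insert_of_notMem hve, he]
      omega
  rw [hkey, card_image_of_injOn, card_sdiff_of_subset hes, hs, he]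
  · omega
  · intro a ha b hb hab
    simp only [coe_sdiff, Set.mem_diff, mem_coe] at ha hb
    simp only at hab
    have : a ∈ insert b e := by rw [← hab]; exact mem_insert_self a e
    rcases mem_insert.mp this with h | h
    · exact h
    · exact absurd h ha.2

lemma plevel_parity {V : Type} [DecidableEq V] [Fintype V]
    (n : ℕ) (hn : 1 ≤ n) (K : Finset (Finset V)) (hK : IsPseudomanifold n K)
    {N : ℕ} (O : Fin N ≃ {s : Finset V // s ∈ K}) (j : ℕ)
    (e : Finset V) (he : e.card = n - 1)
    (F : Finset V) (hF : F ∈ plevel n K O j) (heF : e ⊆ F) :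
    ∃ f ∈ plevel n K O j, f ≠ F ∧ e ⊆ f := by
  classical
  obtain ⟨-, hcard, hfl, -⟩ := hK
  set T := (plevel n K O j).filter (fun f => e ⊆ f) with hT
  set A := (psub K O j).filter (fun s => e ⊆ s) with hA
  set Uf := ((Finset.univ : Finset V).powersetCard n).filter (fun f => e ⊆ f) with hUf
  have hTU : T ⊆ Uf := by
    intro f hf
    simp only [hT, mem_filter, plevel, mem_filter] at hf
    simp only [hUf, mem_filter, mem_powersetCard]
    exact ⟨⟨subset_univ f, hf.1.2.1⟩, hf.2⟩
  have hAs : ∀ s ∈ A, (Uf.filter (fun f => f ⊆ s)).card = 2 := by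
    intro s hs
    simp only [hA, mem_filter] at hs
    have hsK := psub_subset K O j hs.1
    have := two_faces hn (hcard s hsK) he hs.2
    rw [← this]
    congr 1
    ext f
    simp only [hUf, mem_filter, mem_powersetCard, subset_univ, true_and]
    tauto
  have key : ∀ f ∈ Uf,
      ((A.filter (fun s => f ⊆ s)).card : ZMod 2) = if f ∈ T then 1 else 0 := by
    intro f hf
    simp only [hUf, mem_filter, mem_powersetCard] at hf
    obtain ⟨⟨-, hfc⟩, hef⟩ := hf
    by_cases h0 : (A.filter (fun s => f ⊆ s)).card = 0
    · rw [h0]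
      have : f ∉ T := by
        intro hfT
        simp only [hT, mem_filter, plevel, mem_filter] at hfT
        obtain ⟨⟨-, -, ⟨s, hs, hfs⟩, -⟩, -⟩ := hfT
        have : s ∈ A.filter (fun s => f ⊆ s) := by
          simp only [hA, mem_filter]
          exact ⟨⟨hs, hef.trans hfs⟩, hfs⟩
        simp [card_eq_zero.mp h0] at this
      simp [this]
    · obtain ⟨s, hsm⟩ := card_pos.mp (Nat.pos_of_ne_zero h0)
      simp only [mem_filter] at hsm
      obtain ⟨⟨hspsub, -⟩, hfs⟩ := (by simpa only [hA, mem_filter] using hsm :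
        (s ∈ psub K O j ∧ e ⊆ s) ∧ f ⊆ s)
      have hsK := psub_subset K O j hspsub
      have h2 : (K.filter (fun t => f ⊆ t)).card = 2 := hfl f hfc ⟨s, hsK, hfs⟩
      have hsub : A.filter (fun t => f ⊆ t) ⊆ K.filter (fun t => f ⊆ t) := by
        intro t ht
        simp only [hA, mem_filter] at ht ⊢
        exact ⟨psub_subset K O j ht.1.1, ht.2⟩
      have hle : (A.filter (fun t => f ⊆ t)).card ≤ 2 := h2 ▸ card_le_card hsub
      interval_cases h : (A.filter (fun t => f ⊆ t)).card
      · omega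
      · have hfT : f ∈ T := by
          have hsm' : s ∈ K.filter (fun t => f ⊆ t) := mem_filter.mpr ⟨hsK, hfs⟩
          obtain ⟨t, htm, hts⟩ :=
            exists_mem_ne (s := K.filter (fun t => f ⊆ t)) (by omega) s
          simp only [mem_filter] at htm
          have htpsub : t ∉ psub K O j := by
            intro hc
            have h1 : s ∈ A.filter (fun u => f ⊆ u) := by
              simp only [hA, mem_filter]; exact ⟨⟨hspsub, hef.trans hfs⟩, hfs⟩
            have h2' : t ∈ A.filter (fun u => f ⊆ u) := by
              simp only [hA, mem_filter]; exact ⟨⟨hc, hef.trans htm.2⟩, htm.2⟩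
            have : 2 ≤ (A.filter (fun u => f ⊆ u)).card := by
              apply one_lt_card.mpr ⟨s, h1, t, h2', fun hc' => hts hc'.symm⟩
            omega
          simp only [hT, mem_filter, plevel, mem_filter]
          exact ⟨⟨mem_univ f, hfc, ⟨s, hspsub, hfs⟩, ⟨t, htm.1, htpsub, htm.2⟩⟩, hef⟩
        simp [hfT]
      · have hfT : f ∉ T := by
          intro hc
          simp only [hT, mem_filter, plevel, mem_filter] at hc
          obtain ⟨⟨-, -, -, t, htK, htpsub, hft⟩, -⟩ := hc
          have heq : A.filter (fun u => f ⊆ u) = K.filter (fun u => f ⊆ u) :=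
            eq_of_subset_of_card_le hsub (by omega)
          have : t ∈ A.filter (fun u => f ⊆ u) := by
            rw [heq]; exact mem_filter.mpr ⟨htK, hft⟩
          simp only [hA, mem_filter] at this
          exact htpsub this.1.1
        simp [hfT]
        decide
  have hsum : ((∑ s ∈ A, (Uf.filter (fun f => f ⊆ s)).card : ℕ) : ZMod 2)
      = ((T.card : ℕ) : ZMod 2) := by
    have swap : ∑ s ∈ A, (Uf.filter (fun f => f ⊆ s)).card
        = ∑ f ∈ Uf, (A.filter (fun s => f ⊆ s)).card := by
      simp only [card_filter]
      exact Finset.sum_comm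
    rw [swap]
    push_cast
    rw [Finset.sum_congr rfl key]
    rw [Finset.sum_boole, Finset.filter_mem_eq_inter, Finset.inter_eq_right.mpr hTU]
  have hzero : ((T.card : ℕ) : ZMod 2) = 0 := by
    rw [← hsum, Finset.sum_congr rfl hAs, Finset.sum_const, smul_eq_mul]
    push_cast
    rw [show (2:ZMod 2) = 0 by decide, mul_zero]
  have heven : 2 ∣ T.card := (ZMod.natCast_eq_zero_iff _ 2).mp hzero
  have hFT : F ∈ T := mem_filter.mpr ⟨hF, heF⟩
  have h1 : 1 ≤ T.card := card_pos.mpr ⟨F, hFT⟩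
  obtain ⟨g, hgT, hgF⟩ := exists_mem_ne (s := T) (by omega) F
  exact ⟨g, (mem_filter.mp hgT).1, hgF, (mem_filter.mp hgT).2⟩

lemma union_eq_of_ne {V : Type} [DecidableEq V] {n : ℕ} {F e e' : Finset V}
    (hF : F.card = n) (he : e.card = n - 1) (he' : e'.card = n - 1)
    (heF : e ⊆ F) (he'F : e' ⊆ F) (hne : e ≠ e') (hn : 1 ≤ n) : e ∪ e' = F := by
  have hsub : e ∪ e' ⊆ F := union_subset heF he'F
  have hne2 : e ≠ e ∪ e' := by
    intro h
    apply hne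
    have h1 : e' ⊆ e := by rw [h]; exact subset_union_right
    exact (eq_of_subset_of_card_le h1 (by omega)).symm
  have hlt : e.card < (e ∪ e').card :=
    card_lt_card (Finset.ssubset_iff_subset_ne.mpr ⟨subset_union_left, hne2⟩)
  exact eq_of_subset_of_card_le hsub (by omega)

/-- let P = ∂c be the boundary sphere of an n-simplex `c` inside the
pseudomanifold `K` (n ≥ 2), let `X` be one side of P (any face common to a simplex of X
and a simplex not in X lies in a facet of P), and let `S` be a level surface of an
ordering containing a facet `F` on the side `X` with `F ∉ P`.  If `F` shares no
(n−2)-face with P then S contains at least n+1 facets in X and not in P; if `F` shares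
exactly one (n−2)-face with P, then S contains at least n such facets. -/
theorem stmt15 {V : Type} [DecidableEq V] [Fintype V]
    (n : ℕ) (hn : 2 ≤ n) (K : Finset (Finset V)) (hK : IsPseudomanifold n K)
    (c : Finset V) (hc : c.card = n + 1)
    (hcK : ∀ f ∈ simFacets n c, ∃ s ∈ K, f ⊆ s)
    (X : Finset (Finset V)) (hX : X ⊆ K)
    (hside : ∀ s ∈ X, ∀ t ∈ K, t ∉ X → ∀ e : Finset V, e ⊆ s → e ⊆ t →
      ∃ p ∈ simFacets n c, e ⊆ p)
    {N : ℕ} (O : Fin N ≃ {s : Finset V // s ∈ K}) (j : ℕ)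
    (S : Finset (Finset V)) (hS : S = plevel n K O j)
    (F : Finset V) (hFS : F ∈ S) (hFX : ∃ s ∈ X, F ⊆ s) (hFP : F ∉ simFacets n c) :
    ((¬ ∃ e : Finset V, e.card = n - 1 ∧ e ⊆ F ∧ ∃ p ∈ simFacets n c, e ⊆ p) →
      n + 1 ≤ (S.filter (fun f => f ∉ simFacets n c ∧ ∃ s ∈ X, f ⊆ s)).card) ∧
    ((∃! e : Finset V, e.card = n - 1 ∧ e ⊆ F ∧ ∃ p ∈ simFacets n c, e ⊆ p) →
      n ≤ (S.filter (fun f => f ∉ simFacets n c ∧ ∃ s ∈ X, f ⊆ s)).card) := by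
  classical
  subst hS
  have hFcard : F.card = n := by
    have := hFS
    simp only [plevel, mem_filter] at this
    exact this.2.1
  set G := (plevel n K O j).filter (fun f => f ∉ simFacets n c ∧ ∃ s ∈ X, f ⊆ s) with hG
  have hFG : F ∈ G := mem_filter.mpr ⟨hFS, hFP, hFX⟩
  set E₀ := (F.powersetCard (n-1)).filter
      (fun e => ¬ ∃ p ∈ simFacets n c, e ⊆ p) with hE₀
  -- for each e in E₀, get a companion facet
  have main : ∀ e ∈ E₀, ∃ g ∈ G.erase F, e ⊆ g := by
    intro e he
    simp only [hE₀, mem_filter, mem_powersetCard] at he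
    obtain ⟨⟨heF, hec⟩, hnp⟩ := he
    obtain ⟨g, hgpl, hgF, heg⟩ := plevel_parity n (by omega) K hK O j e hec F hFS heF
    refine ⟨g, mem_erase.mpr ⟨hgF, mem_filter.mpr ⟨hgpl, ?_, ?_⟩⟩, heg⟩
    · intro hgc
      exact hnp ⟨g, hgc, heg⟩
    · simp only [plevel, mem_filter] at hgpl
      obtain ⟨-, hgcard, ⟨s1, hs1, hgs1⟩, s2, hs2K, -, hgs2⟩ := hgpl
      have hs1K := psub_subset K O j hs1
      by_cases h1 : s1 ∈ X
      · exact ⟨s1, h1, hgs1⟩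
      by_cases h2 : s2 ∈ X
      · exact ⟨s2, h2, hgs2⟩
      exfalso
      obtain ⟨s, hsX, hFs⟩ := hFX
      exact hnp (hside s hsX s1 hs1K h1 e (heF.trans hFs) (heg.trans hgs1))
  choose gg hgg hgge using main
  -- injectivity and counting
  have hcount : E₀.card + 1 ≤ G.card := by
    have hcards : ∀ (x : {e // e ∈ E₀}), True := fun _ => trivial
    have hinj : ∀ (x : {e // e ∈ E₀}) (_ : x ∈ E₀.attach)
        (y : {e // e ∈ E₀}) (_ : y ∈ E₀.attach),
        gg x.1 x.2 = gg y.1 y.2 → x = y := by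
      rintro ⟨e, he⟩ - ⟨e', he'⟩ - heq
      by_contra hne
      have hnee : e ≠ e' := fun h => hne (by simpa using h)
      have he1 := he; have he2 := he'
      simp only [hE₀, mem_filter, mem_powersetCard] at he1 he2
      have hgmem := hgg e he
      have hgmem' := hgg e' he'
      have hgcard : (gg e he).card = n := by
        have := (mem_filter.mp (mem_of_mem_erase hgmem)).1
        simp only [plevel, mem_filter] at this
        exact this.2.1
      have hunion : e ∪ e' = F :=
        union_eq_of_ne hFcard he1.1.2 he2.1.2 he1.1.1 he2.1.1 hnee (by omega)
      have hFsub : F ⊆ gg e he := by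
        rw [← hunion]
        exact union_subset (hgge e he) (heq ▸ hgge e' he')
      have : gg e he = F := (eq_of_subset_of_card_le hFsub (by omega)).symm
      exact (mem_erase.mp hgmem).1 this
    have h1 : E₀.card ≤ (G.erase F).card := by
      rw [← card_attach]
      exact card_le_card_of_injOn (fun x => gg x.1 x.2)
        (fun x _ => hgg x.1 x.2) hinj
    have h2 : (G.erase F).card = G.card - 1 := card_erase_of_mem hFG
    have h3 : 1 ≤ G.card := card_pos.mpr ⟨F, hFG⟩
    omega
  have hpow : (F.powersetCard (n-1)).card = n := by
    rw [card_powersetCard, hFcard]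
    have h1 : n - (n - 1) = 1 := by omega
    rw [← Nat.choose_symm (Nat.sub_le n 1), h1, Nat.choose_one_right]
  constructor
  · intro hno
    have : E₀ = F.powersetCard (n-1) := by
      rw [hE₀]
      apply filter_true_of_mem
      intro e he
      simp only [mem_powersetCard] at he
      exact fun hp => hno ⟨e, he.2, he.1, hp⟩
    rw [this, hpow] at hcount
    exact hcount
  · rintro ⟨e₀, ⟨he₀c, he₀F, he₀p⟩, huniq⟩
    have hfilt : (F.powersetCard (n-1)).filter (fun e => ∃ p ∈ simFacets n c, e ⊆ p)
        = {e₀} := by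
      apply Finset.Subset.antisymm
      · intro e he
        simp only [mem_filter, mem_powersetCard] at he
        rw [mem_singleton]
        exact huniq e ⟨he.1.2, he.1.1, he.2⟩
      · intro e he
        rw [mem_singleton] at he
        subst he
        exact mem_filter.mpr ⟨mem_powersetCard.mpr ⟨he₀F, he₀c⟩, he₀p⟩
    have hEcard : E₀.card = n - 1 := by
      have := card_filter_add_card_filter_not
        (s := F.powersetCard (n-1)) (p := fun e => ∃ p ∈ simFacets n c, e ⊆ p)
      rw [hfilt, card_singleton, hpow] at this
      have : E₀.card = n - 1 := by
        rw [hE₀]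
        omega
      exact this
    omega
end
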